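/- arXiv:2604.24151 — 7 statements merged into one kernel-verified Lean document; each statement's English description precedes it below -/
import Mathlib

section
/- In an idempotent commutative semiring generated by a finite set of variables, subject to axioms s^{b(s)} = 0 for each bounded variable s (with b(s) ≥ 2), every product of n linear terms (each a nonempty sum of distinct bounded variables) with n > Σ_s (b(s)−1) is equal to 0. -/
/-- In an idempotent commutative semiring with axioms `s ^ b s = 0`
for each bounded variable `s` (with `b s ≥ 2`), every product of `n` linear terms
(each a nonempty sum of distinct bounded variables) with
`n > Σ_s (b s − 1)` equals `0`. -/
theorem linear_product_bounded_only_zero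
    {B : Type*} [Fintype B] (b : B → ℕ) (hb : ∀ s, 2 ≤ b s)
    {R : Type*} [CommSemiring R] (hadd : ∀ a : R, a + a = a)
    (v : B → R) (hv : ∀ s, v s ^ b s = 0)
    (l : List (Finset B)) (hne : ∀ W ∈ l, W.Nonempty)
    (hlen : ∑ s : B, (b s - 1) < l.length) :
    (l.map (fun W => ∑ s ∈ W, v s)).prod = 0 := by
  classical
  suffices h : ∀ (l : List (Finset B)), (∀ W ∈ l, W.Nonempty) →
      ∀ e : B → ℕ, (∑ s : B, (b s - 1 - e s)) < l.length →
      (l.map (fun W => ∑ s ∈ W, v s)).prod * ∏ s : B, v s ^ e s = 0 by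
    have := h l hne (fun _ => 0) (by simpa using hlen)
    simpa using this
  intro l
  induction l with
  | nil => intro _ e he; simp at he
  | cons W l ih =>
    intro hne' e he
    simp only [List.map_cons, List.prod_cons]
    rw [mul_assoc, Finset.sum_mul]
    apply Finset.sum_eq_zero
    intro s hs
    have hsplit : ∏ t : B, v t ^ e t
        = v s ^ e s * ∏ t ∈ Finset.univ.erase s, v t ^ e t :=
      (Finset.mul_prod_erase _ _ (Finset.mem_univ s)).symm
    by_cases hcase : e s + 1 < b s
    · -- absorb v s into the exponent of s and apply the IH
      have hupd : v s * ∏ t : B, v t ^ e t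
          = ∏ t : B, v t ^ (Function.update e s (e s + 1)) t := by
        rw [hsplit, ← Finset.mul_prod_erase _ (fun t => v t ^ (Function.update e s (e s + 1)) t)
          (Finset.mem_univ s), Function.update_self, ← mul_assoc, ← pow_succ']
        congr 1
        apply Finset.prod_congr rfl
        intro t ht
        rw [Function.update_of_ne (Finset.ne_of_mem_erase ht)]
      rw [mul_left_comm, hupd]
      apply ih (fun U hU => hne' U (List.mem_cons_of_mem _ hU))
      -- sum strictly decreased
      have hlt : ∑ t : B, (b t - 1 - (Function.update e s (e s + 1)) t)
          < ∑ t : B, (b t - 1 - e t) := by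
        apply Finset.sum_lt_sum
        · intro t _
          by_cases hts : t = s
          · subst hts; rw [Function.update_self]; omega
          · rw [Function.update_of_ne hts]
        · refine ⟨s, Finset.mem_univ s, ?_⟩
          rw [Function.update_self]; omega
      have : ∑ t : B, (b t - 1 - e t) ≤ l.length := by
        simpa [List.length_cons, Nat.lt_succ_iff] using he
      omega
    · -- the exponent of s reaches b s, so the term is zero
      have hpow : v s ^ (e s + 1) = 0 := by
        have : e s + 1 = b s + (e s + 1 - b s) := by omega
        rw [this, pow_add, hv, zero_mul]
      rw [mul_comm ((l.map (fun W => ∑ s ∈ W, v s)).prod), ← mul_assoc, hsplit,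
        ← mul_assoc, ← pow_succ', hpow, zero_mul, zero_mul]
end

section
/- Let t be a product of linear terms over 2-threshold variables (each variable x satisfies x² = x) in an idempotent commutative semiring. Then the set of maximal monomials of the normal form of t (maximal with respect to divisibility/inclusion of supports) coincides exactly with the set of monomials of t's normal form having maximal degree. -/
/-- A monomial of the product `ℓ₁⋯ℓ_k` of linear terms over 2-threshold variables:
a finite set `m ⊆ X` admitting an injective choice function `f` with
`y ∈ ℓ (f y)` for each `y ∈ m`. -/
def IsMonomial {X : Type*} {k : ℕ} (ℓ : Fin k → Finset X) (m : Finset X) : Prop :=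
  ∃ f : X → Fin k, Set.InjOn f m ∧ ∀ y ∈ m, y ∈ ℓ (f y)

section Aux

variable {X : Type*} [DecidableEq X] {k : ℕ} (ℓ : Fin k → Finset X)

/-- neighborhood of a set of variables: indices of linear factors containing one of them -/
def nbhd (S : Finset X) : Finset (Fin k) :=
  S.biUnion fun y => Finset.univ.filter fun i => y ∈ ℓ i

variable {ℓ}

lemma nbhd_mono {S T : Finset X} (h : S ⊆ T) : nbhd ℓ S ⊆ nbhd ℓ T :=
  Finset.biUnion_subset_biUnion_of_subset_left _ h

lemma nbhd_union (S T : Finset X) : nbhd ℓ (S ∪ T) = nbhd ℓ S ∪ nbhd ℓ T := by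
  ext i
  simp only [nbhd, Finset.mem_biUnion, Finset.mem_union, Finset.mem_filter, Finset.mem_univ,
    true_and]
  constructor
  · rintro ⟨y, hy | hy, h⟩
    · exact Or.inl ⟨y, hy, h⟩
    · exact Or.inr ⟨y, hy, h⟩
  · rintro (⟨y, hy, h⟩ | ⟨y, hy, h⟩)
    · exact ⟨y, Or.inl hy, h⟩
    · exact ⟨y, Or.inr hy, h⟩

lemma hall_of_isMonomial {m : Finset X} (hm : IsMonomial ℓ m) :
    ∀ S ⊆ m, S.card ≤ (nbhd ℓ S).card := by
  obtain ⟨f, hinj, hmem⟩ := hm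
  intro S hS
  apply Finset.card_le_card_of_injOn f
  · intro y hy
    simp only [Finset.mem_coe, nbhd, Finset.mem_biUnion, Finset.mem_filter, Finset.mem_univ]
    exact ⟨y, hy, trivial, hmem y (hS hy)⟩
  · exact hinj.mono (by exact_mod_cast hS)

lemma isMonomial_of_hall {m : Finset X} (g : X → Fin k)
    (h : ∀ S ⊆ m, S.card ≤ (nbhd ℓ S).card) : IsMonomial ℓ m := by
  classical
  have key : ∀ s : Finset ↥m, s.card ≤ (s.biUnion fun y =>
      Finset.univ.filter fun i => (y : X) ∈ ℓ i).card := by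
    intro s
    have h1 : (s.image Subtype.val).card = s.card :=
      Finset.card_image_of_injective _ Subtype.val_injective
    have h2 : s.biUnion (fun y => Finset.univ.filter fun i => (y : X) ∈ ℓ i)
        = nbhd ℓ (s.image Subtype.val) := by
      ext i
      simp only [nbhd, Finset.mem_biUnion, Finset.mem_image, Finset.mem_filter, Finset.mem_univ,
        true_and, Finset.mem_attach]
      constructor
      · rintro ⟨y, hy, h'⟩
        exact ⟨(y : X), ⟨y, hy, rfl⟩, h'⟩
      · rintro ⟨x, ⟨y, hy, rfl⟩, h'⟩
        exact ⟨y, hy, h'⟩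
    have h3 : s.image Subtype.val ⊆ m := by
      intro x hx
      simp only [Finset.mem_image] at hx
      obtain ⟨⟨y, hy⟩, _, rfl⟩ := hx
      exact hy
    rw [h2, ← h1]
    exact h _ h3
  obtain ⟨f', hf'inj, hf'mem⟩ :=
    (Finset.all_card_le_biUnion_card_iff_exists_injective _).mp key
  refine ⟨fun y => if hy : y ∈ m then f' ⟨y, hy⟩ else g y, ?_, ?_⟩
  · intro a ha b hb hab
    simp only [Finset.mem_coe] at ha hb
    simp only [dif_pos ha, dif_pos hb] at hab
    exact congrArg Subtype.val (hf'inj hab)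
  · intro y hy
    have := hf'mem ⟨y, hy⟩
    simp only [Finset.mem_filter, Finset.mem_univ] at this
    simp only [dif_pos hy]
    exact this.2

lemma tight_union {m S T : Finset X}
    (hallm : ∀ S ⊆ m, S.card ≤ (nbhd ℓ S).card)
    (hS : S ⊆ m) (hT : T ⊆ m)
    (h1 : (nbhd ℓ S).card ≤ S.card) (h2 : (nbhd ℓ T).card ≤ T.card) :
    (nbhd ℓ (S ∪ T)).card ≤ (S ∪ T).card := by
  have hint : (S ∩ T).card ≤ (nbhd ℓ (S ∩ T)).card :=
    hallm _ (fun x hx => hS (Finset.mem_of_mem_inter_left hx))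
  have hsub : nbhd ℓ (S ∩ T) ⊆ nbhd ℓ S ∩ nbhd ℓ T :=
    Finset.subset_inter (nbhd_mono Finset.inter_subset_left)
      (nbhd_mono Finset.inter_subset_right)
  have key : (nbhd ℓ (S ∪ T)).card + (S ∩ T).card ≤ (S ∪ T).card + (S ∩ T).card := by
    calc (nbhd ℓ (S ∪ T)).card + (S ∩ T).card
        ≤ (nbhd ℓ S ∪ nbhd ℓ T).card + (nbhd ℓ S ∩ nbhd ℓ T).card := by
          rw [nbhd_union]
          exact Nat.add_le_add le_rfl (hint.trans (Finset.card_le_card hsub))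
      _ = (nbhd ℓ S).card + (nbhd ℓ T).card := Finset.card_union_add_card_inter _ _
      _ ≤ S.card + T.card := Nat.add_le_add h1 h2
      _ = (S ∪ T).card + (S ∩ T).card := (Finset.card_union_add_card_inter _ _).symm
  exact Nat.le_of_add_le_add_right key

/-- the exchange (augmentation) property of partial transversals -/
lemma exchange {m m' : Finset X} (hm : IsMonomial ℓ m) (hm' : IsMonomial ℓ m')
    (hcard : m.card < m'.card) :
    ∃ y ∈ m', y ∉ m ∧ IsMonomial ℓ (insert y m) := by
  classical
  by_contra hcon
  push_neg at hcon
  have hallm := hall_of_isMonomial hm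
  have hallm' := hall_of_isMonomial hm'
  obtain ⟨g, -, -⟩ := hm
  -- for each y ∈ m' \ m, a tight set Sy ⊆ m absorbing the neighbors of y
  have step : ∀ y ∈ m' \ m, ∃ Sy ⊆ m,
      (nbhd ℓ Sy).card ≤ Sy.card ∧ nbhd ℓ {y} ⊆ nbhd ℓ Sy := by
    intro y hy
    rw [Finset.mem_sdiff] at hy
    have hnot : ¬ IsMonomial ℓ (insert y m) := hcon y hy.1 hy.2
    have hfail : ¬ ∀ S ⊆ insert y m, S.card ≤ (nbhd ℓ S).card :=
      fun h => hnot (isMonomial_of_hall g h)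
    push_neg at hfail
    obtain ⟨S, hSsub, hSlt⟩ := hfail
    have hyS : y ∈ S := by
      by_contra hyS
      have : S ⊆ m := fun x hx => by
        rcases Finset.mem_insert.mp (hSsub hx) with rfl | h
        · exact absurd hx hyS
        · exact h
      exact absurd (hallm S this) (not_le.mpr hSlt)
    set S₀ := S.erase y with hS₀
    have hS₀m : S₀ ⊆ m := by
      intro x hx
      rw [hS₀, Finset.mem_erase] at hx
      rcases Finset.mem_insert.mp (hSsub hx.2) with rfl | h
      · exact absurd rfl hx.1
      · exact h
    have hScard : S.card = S₀.card + 1 := by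
      rw [hS₀, Finset.card_erase_of_mem hyS]
      omega
    have hSeq : S = insert y S₀ := by
      rw [hS₀, Finset.insert_erase hyS]
    have h1 : (nbhd ℓ S).card ≤ S₀.card := by omega
    have h2 : S₀.card ≤ (nbhd ℓ S₀).card := hallm _ hS₀m
    have h3 : nbhd ℓ S₀ ⊆ nbhd ℓ S := nbhd_mono (by rw [hSeq]; exact Finset.subset_insert _ _)
    have h4 : nbhd ℓ S₀ = nbhd ℓ S :=
      Finset.eq_of_subset_of_card_le h3 (by omega)
    have h5 : (nbhd ℓ S₀).card = (nbhd ℓ S).card := by rw [h4]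
    refine ⟨S₀, hS₀m, by omega, ?_⟩
    rw [h4]
    apply nbhd_mono
    rw [hSeq]
    intro x hx
    rw [Finset.mem_singleton] at hx
    exact hx ▸ Finset.mem_insert_self _ _
  choose Sy hSy₁ hSy₂ hSy₃ using step
  -- the union of the tight sets is tight
  have tightBig : ∀ T : Finset X, (hT : ∀ y ∈ T, y ∈ m' \ m) →
      (T.attach.biUnion fun y => Sy y (hT y y.2)) ⊆ m ∧
      (nbhd ℓ (T.attach.biUnion fun y => Sy y (hT y y.2))).card ≤
        (T.attach.biUnion fun y => Sy y (hT y y.2)).card := by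
    intro T
    induction T using Finset.induction_on with
    | empty => intro _; simp [nbhd]
    | @insert a T ha ih =>
      intro hT
      have hT' : ∀ y ∈ T, y ∈ m' \ m := fun y hy => hT y (Finset.mem_insert_of_mem hy)
      obtain ⟨ihsub, ihcard⟩ := ih hT'
      have hrw : ((insert a T).attach.biUnion fun y => Sy y (hT y y.2)) =
          Sy a (hT a (Finset.mem_insert_self _ _)) ∪
            (T.attach.biUnion fun y => Sy y (hT' y y.2)) := by
        ext x
        simp only [Finset.mem_biUnion, Finset.mem_attach, Finset.mem_union, true_and]
        constructor
        · rintro ⟨⟨y, hy⟩, hx⟩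
          rcases Finset.mem_insert.mp hy with rfl | hyT
          · exact Or.inl hx
          · exact Or.inr ⟨⟨y, hyT⟩, hx⟩
        · rintro (hx | ⟨⟨y, hy⟩, hx⟩)
          · exact ⟨⟨a, Finset.mem_insert_self _ _⟩, hx⟩
          · exact ⟨⟨y, Finset.mem_insert_of_mem hy⟩, hx⟩
      rw [hrw]
      constructor
      · exact Finset.union_subset (hSy₁ _ _) ihsub
      · exact tight_union hallm (hSy₁ _ _) ihsub (hSy₂ _ _) ihcard
  obtain ⟨hSsubm, hStight⟩ := tightBig (m' \ m) (fun y hy => hy)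
  set S := ((m' \ m).attach.biUnion fun y => Sy y y.2) with hSdef
  have hnbdiff : nbhd ℓ (m' \ m) ⊆ nbhd ℓ S := by
    intro i hi
    simp only [nbhd, Finset.mem_biUnion, Finset.mem_filter, Finset.mem_univ, true_and] at hi
    obtain ⟨y, hy, hmem⟩ := hi
    apply nbhd_mono (show Sy y hy ⊆ S from ?_)
    · apply hSy₃ y hy
      simp [nbhd, hmem]
    · intro x hx
      rw [hSdef]
      exact Finset.mem_biUnion.mpr ⟨⟨y, hy⟩, Finset.mem_attach _ _, hx⟩
  -- apply Hall for m' to (m' \ m) ∪ (S ∩ m')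
  have hS'sub : (m' \ m) ∪ (S ∩ m') ⊆ m' :=
    Finset.union_subset (Finset.sdiff_subset) (Finset.inter_subset_right)
  have hnb' : nbhd ℓ ((m' \ m) ∪ (S ∩ m')) ⊆ nbhd ℓ S := by
    rw [nbhd_union]
    exact Finset.union_subset hnbdiff (nbhd_mono Finset.inter_subset_left)
  have hchain : ((m' \ m) ∪ (S ∩ m')).card ≤ S.card :=
    (hallm' _ hS'sub).trans ((Finset.card_le_card hnb').trans hStight)
  have hdisj : Disjoint (m' \ m) (S ∩ m') := by
    apply Finset.disjoint_left.mpr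
    intro x hx1 hx2
    exact (Finset.mem_sdiff.mp hx1).2 (hSsubm (Finset.mem_of_mem_inter_left hx2))
  rw [Finset.card_union_of_disjoint hdisj] at hchain
  have hSsplit : S.card = (S ∩ m').card + (S \ m').card :=
    (Finset.card_inter_add_card_sdiff _ _).symm
  have h5 : (m' \ m).card ≤ (S \ m').card := by omega
  have h6 : (S \ m').card ≤ (m \ m').card :=
    Finset.card_le_card (fun x hx => Finset.mem_sdiff.mpr
      ⟨hSsubm (Finset.mem_sdiff.mp hx).1, (Finset.mem_sdiff.mp hx).2⟩)
  have h7 : m'.card = (m' \ m).card + (m' ∩ m).card :=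
    (Finset.card_sdiff_add_card_inter _ _).symm
  have h8 : m.card = (m \ m').card + (m ∩ m').card :=
    (Finset.card_sdiff_add_card_inter _ _).symm
  have h9 : (m' ∩ m).card = (m ∩ m').card := by rw [Finset.inter_comm]
  omega

end Aux

/-- for a product of linear terms over 2-threshold variables, a
monomial of the normal form is maximal (w.r.t. inclusion) iff it has maximal
degree; hence the set of maximal monomials coincides with the set of monomials
of maximal degree. -/
theorem maximal_iff_max_degree_two_threshold
    {X : Type*} [DecidableEq X] {k : ℕ} (ℓ : Fin k → Finset X)
    (m : Finset X) (hm : IsMonomial ℓ m) :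
    (∀ m', IsMonomial ℓ m' → m ⊆ m' → m = m') ↔
      (∀ m', IsMonomial ℓ m' → m'.card ≤ m.card) := by
  constructor
  · intro hmax m' hm'
    by_contra hlt
    push_neg at hlt
    obtain ⟨y, _, hym, hins⟩ := exchange hm hm' hlt
    have := hmax _ hins (Finset.subset_insert _ _)
    exact hym (this ▸ Finset.mem_insert_self _ _)
  · intro hdeg m' hm' hsub
    exact Finset.eq_of_subset_of_card_le hsub (hdeg m' hm')
end

section
/- Let t be a product of linear terms over threshold variables, where each variable x has threshold θ(x) ≥ 2 and satisfies x^{θ(x)} = x^{θ(x)−1}. If ℓ is another linear term such that the maximal degree of monomials in the normal form of t·ℓ equals that of t, then the set of maximal monomials of nf(t·ℓ) equals the set of maximal monomials of nf(t). -/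
set_option linter.unusedSectionVars false
set_option linter.unusedVariables false


/-- Normal form of a product of linear terms `ℓ₁⋯ℓ_k` over threshold variables
(`x^{θ x} = x^{θ x − 1}`): the set of reduced monomials obtained by choosing one
variable in each factor and capping each multiplicity at `θ x − 1`. -/
def NfSet {X : Type*} [DecidableEq X] (θ : X → ℕ) {k : ℕ} (ℓ : Fin k → Finset X) :
    Set (X →₀ ℕ) :=
  {m | ∃ g : Fin k → X, (∀ i, g i ∈ ℓ i) ∧
    ∀ x, m x = min (Finset.univ.filter (fun i => g i = x)).card (θ x - 1)}

/-- Maximal monomials of a set of reduced monomials, w.r.t. the componentwise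
multiplicity order. -/
def MaxMon {X : Type*} (S : Set (X →₀ ℕ)) : Set (X →₀ ℕ) :=
  {m | m ∈ S ∧ ∀ m' ∈ S, m ≤ m' → m = m'}

/-- Maximal degree among monomials of `S`. -/
noncomputable def maxDeg {X : Type*} (S : Set (X →₀ ℕ)) : ℕ :=
  sSup {n | ∃ m ∈ S, (m.sum fun _ e => e) = n}

open Finset

namespace NfAux

variable {X : Type*} [DecidableEq X]

/-- degree of a monomial -/
def deg (m : X →₀ ℕ) : ℕ := m.sum fun _ e => e

/-- count finsupp of a choice function -/
noncomputable def cntF {n : ℕ} (g : Fin n → X) : X →₀ ℕ := ∑ i, Finsupp.single (g i) 1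

lemma cntF_apply {n : ℕ} (g : Fin n → X) (x : X) :
    cntF g x = (univ.filter fun i => g i = x).card := by
  rw [cntF, Finsupp.finset_sum_apply, Finset.card_filter]
  exact Finset.sum_congr rfl fun i _ => by rw [Finsupp.single_apply]

/-- cap-reduction of a count vector -/
noncomputable def red (θ : X → ℕ) (c : X →₀ ℕ) : X →₀ ℕ :=
  Finsupp.onFinset c.support (fun x => min (c x) (θ x - 1)) (by
    intro x h
    rw [Finsupp.mem_support_iff]
    intro h0
    simp [h0] at h)

lemma red_apply (θ : X → ℕ) (c : X →₀ ℕ) (x : X) : red θ c x = min (c x) (θ x - 1) := rfl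

lemma mem_nfSet_iff (θ : X → ℕ) {k : ℕ} (ℓ : Fin k → Finset X) (m : X →₀ ℕ) :
    m ∈ NfSet θ ℓ ↔ ∃ g : Fin k → X, (∀ i, g i ∈ ℓ i) ∧ m = red θ (cntF g) := by
  constructor
  · rintro ⟨g, hg, hm⟩
    exact ⟨g, hg, Finsupp.ext fun x => by rw [hm x, red_apply, cntF_apply]⟩
  · rintro ⟨g, hg, rfl⟩
    exact ⟨g, hg, fun x => by rw [red_apply, cntF_apply]⟩

lemma deg_eq_sum (c : X →₀ ℕ) {V : Finset X} (h : c.support ⊆ V) :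
    deg c = ∑ x ∈ V, c x :=
  Finsupp.sum_of_support_subset c h _ (by simp)

lemma support_cntF_subset {n : ℕ} (g : Fin n → X) : (cntF g).support ⊆ univ.image g := by
  intro x hx
  rw [Finsupp.mem_support_iff, cntF_apply] at hx
  obtain ⟨i, hi⟩ := Finset.card_ne_zero.mp hx  -- nonempty
  rw [mem_filter] at hi
  exact mem_image.mpr ⟨i, mem_univ i, hi.2⟩

lemma support_red_subset (θ : X → ℕ) (c : X →₀ ℕ) : (red θ c).support ⊆ c.support :=
  Finsupp.support_onFinset_subset

lemma deg_cntF {n : ℕ} (g : Fin n → X) : deg (cntF g) = n := by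
  rw [deg_eq_sum (cntF g) (support_cntF_subset g)]
  simp only [cntF_apply]
  rw [← Finset.card_eq_sum_card_image]
  simp
lemma deg_red_le (θ : X → ℕ) (c : X →₀ ℕ) : deg (red θ c) ≤ deg c := by
  rw [deg_eq_sum (red θ c) (support_red_subset θ c), deg_eq_sum c (subset_refl _)]
  exact Finset.sum_le_sum fun x _ => min_le_left _ _

lemma deg_nf_le (θ : X → ℕ) {k : ℕ} {ℓ : Fin k → Finset X} {m : X →₀ ℕ}
    (hm : m ∈ NfSet θ ℓ) : deg m ≤ k := by
  obtain ⟨g, -, rfl⟩ := (mem_nfSet_iff θ ℓ m).mp hm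
  calc deg (red θ (cntF g)) ≤ deg (cntF g) := deg_red_le θ _
  _ = k := deg_cntF g

lemma eq_of_le_of_deg_le {m m' : X →₀ ℕ} (hle : m ≤ m') (hdeg : deg m' ≤ deg m) :
    m = m' := by
  have hsupp : m.support ⊆ m'.support := by
    intro x hx
    rw [Finsupp.mem_support_iff] at hx ⊢
    intro h0
    exact hx (Nat.le_antisymm (h0 ▸ Finsupp.le_def.mp hle x) (Nat.zero_le _))
  rw [deg_eq_sum m hsupp, deg_eq_sum m' (subset_refl _)] at hdeg
  have hpt : ∀ x ∈ m'.support, m x ≤ m' x := fun x _ => Finsupp.le_def.mp hle x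
  have := (Finset.sum_eq_sum_iff_of_le hpt).mp
    (Nat.le_antisymm (Finset.sum_le_sum hpt) hdeg)
  ext x
  by_cases hx : x ∈ m'.support
  · exact this x hx
  · rw [Finsupp.notMem_support_iff] at hx
    have := Finsupp.le_def.mp hle x
    omega

lemma deg_add (a b : X →₀ ℕ) : deg (a + b) = deg a + deg b := by
  classical
  rw [deg_eq_sum (a + b) (Finsupp.support_add), deg_eq_sum a Finset.subset_union_left,
    deg_eq_sum b Finset.subset_union_right, ← Finset.sum_add_distrib]
  rfl

lemma deg_single (y : X) : deg (Finsupp.single y 1) = 1 := by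
  rw [deg, Finsupp.sum_single_index]; rfl

/-- bump lemma: undersaturated case -/
lemma red_add_single_of_lt (θ : X → ℕ) {c : X →₀ ℕ} {y : X} (h : c y < θ y - 1) :
    red θ (c + Finsupp.single y 1) = red θ c + Finsupp.single y 1 := by
  ext x
  rw [Finsupp.add_apply, red_apply, red_apply, Finsupp.add_apply]
  by_cases hxy : y = x
  · subst hxy
    rw [Finsupp.single_eq_same]
    omega
  · rw [Finsupp.single_eq_of_ne' hxy]
    omega

/-- bump lemma: saturated case -/
lemma red_add_single_of_ge (θ : X → ℕ) {c : X →₀ ℕ} {y : X} (h : θ y - 1 ≤ c y) :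
    red θ (c + Finsupp.single y 1) = red θ c := by
  ext x
  rw [red_apply, red_apply, Finsupp.add_apply]
  by_cases hxy : y = x
  · subst hxy; rw [Finsupp.single_eq_same]; omega
  · rw [Finsupp.single_eq_of_ne' hxy]; omega

lemma red_le_red_add_single (θ : X → ℕ) (c : X →₀ ℕ) (y : X) :
    red θ c ≤ red θ (c + Finsupp.single y 1) := by
  rw [Finsupp.le_def]
  intro x
  rw [red_apply, red_apply, Finsupp.add_apply]
  exact min_le_min (Nat.le_add_right _ _) le_rfl

lemma cntF_snoc {k : ℕ} (g : Fin k → X) (y : X) :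
    cntF (Fin.snoc g y) = cntF g + Finsupp.single y 1 := by
  rw [cntF, Fin.sum_univ_castSucc]
  simp [cntF]

lemma snoc_eq {k : ℕ} (G : Fin (k + 1) → X) :
    G = Fin.snoc (fun i => G i.castSucc) (G (Fin.last k)) := by
  funext i
  induction i using Fin.lastCases with
  | last => simp
  | cast j => simp

lemma mem_nfSet_snoc_iff (θ : X → ℕ) {k : ℕ} (ℓ : Fin k → Finset X) (L : Finset X)
    (m : X →₀ ℕ) :
    m ∈ NfSet θ (Fin.snoc ℓ L) ↔ ∃ g : Fin k → X, (∀ i, g i ∈ ℓ i) ∧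
      ∃ y ∈ L, m = red θ (cntF g + Finsupp.single y 1) := by
  rw [mem_nfSet_iff]
  constructor
  · rintro ⟨G, hG, rfl⟩
    refine ⟨fun i => G i.castSucc, fun i => by simpa using hG i.castSucc,
      G (Fin.last k), by simpa using hG (Fin.last k), ?_⟩
    rw [← cntF_snoc, ← snoc_eq]
  · rintro ⟨g, hg, y, hy, rfl⟩
    refine ⟨Fin.snoc g y, fun i => ?_, by rw [cntF_snoc]⟩
    induction i using Fin.lastCases with
    | last => simpa using hy
    | cast j => simpa using hg j

lemma nfSet_finite (θ : X → ℕ) {k : ℕ} (ℓ : Fin k → Finset X) : (NfSet θ ℓ).Finite := by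
  have hfin : (Set.univ.pi fun i : Fin k => ((ℓ i : Set X))).Finite :=
    Set.Finite.pi fun i => (ℓ i).finite_toSet
  refine Set.Finite.subset (hfin.image fun g => red θ (cntF g)) ?_
  intro m hm
  obtain ⟨g, hg, rfl⟩ := (mem_nfSet_iff θ ℓ m).mp hm
  exact ⟨g, fun i _ => hg i, rfl⟩

lemma exists_maxMon_above {S : Set (X →₀ ℕ)} (hfin : S.Finite) {m₀ : X →₀ ℕ}
    (hm₀ : m₀ ∈ S) : ∃ m₁ ∈ MaxMon S, m₀ ≤ m₁ := by
  obtain ⟨m₁, hmem, hmax⟩ := Set.Finite.exists_maximalFor id {m ∈ S | m₀ ≤ m}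
    (hfin.subset fun m h => h.1) ⟨m₀, hm₀, le_refl _⟩
  exact ⟨m₁, ⟨hmem.1, fun m' hm' hle => le_antisymm hle (hmax ⟨hm', hmem.2.trans hle⟩ hle)⟩, hmem.2⟩

lemma nfSet_nonempty (θ : X → ℕ) {k : ℕ} {ℓ : Fin k → Finset X}
    (hℓ : ∀ i, (ℓ i).Nonempty) : (NfSet θ ℓ).Nonempty := by
  refine ⟨red θ (cntF fun i => (hℓ i).choose), ?_⟩
  exact (mem_nfSet_iff θ ℓ _).mpr ⟨_, fun i => (hℓ i).choose_spec, rfl⟩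

lemma bddAbove_degSet (θ : X → ℕ) {k : ℕ} (ℓ : Fin k → Finset X) :
    BddAbove {n | ∃ m ∈ NfSet θ ℓ, (m.sum fun _ e => e) = n} := by
  refine ⟨k, fun n hn => ?_⟩
  obtain ⟨m, hm, rfl⟩ := hn
  exact deg_nf_le θ hm

lemma le_maxDeg (θ : X → ℕ) {k : ℕ} {ℓ : Fin k → Finset X} {m : X →₀ ℕ}
    (hm : m ∈ NfSet θ ℓ) : deg m ≤ maxDeg (NfSet θ ℓ) :=
  le_csSup (bddAbove_degSet θ ℓ) ⟨m, hm, rfl⟩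

lemma maxDeg_le (θ : X → ℕ) {k : ℕ} {ℓ : Fin k → Finset X} {N : ℕ}
    (hne : (NfSet θ ℓ).Nonempty) (hb : ∀ m ∈ NfSet θ ℓ, deg m ≤ N) :
    maxDeg (NfSet θ ℓ) ≤ N := by
  refine csSup_le ⟨deg hne.choose, hne.choose, hne.choose_spec, rfl⟩ ?_
  rintro n ⟨m, hm, rfl⟩
  exact hb m hm
section Paths

variable {k : ℕ} (ℓ : Fin k → Finset X)

/-- edge relation: `x → y` if some factor index `i` currently assigned to `x`
could be reassigned to `y`. -/
def rel (g : Fin k → X) (x y : X) : Prop := ∃ i, g i = x ∧ y ∈ ℓ i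

/-- `IsPath g x l y`: chain of edges from `x` through the vertices in `l`,
ending at `y`. -/
def IsPath (g : Fin k → X) : X → List X → X → Prop
  | x, [], y => x = y
  | x, z :: l, y => rel ℓ g x z ∧ IsPath g z l y

variable {ℓ}

lemma isPath_suffix {g : Fin k → X} :
    ∀ (l : List X) (z y x : X), IsPath ℓ g z l y → x ∈ z :: l →
      ∃ l' : List X, l'.length ≤ l.length ∧ IsPath ℓ g x l' y := by
  intro l
  induction l with
  | nil =>
    intro z y x hp hx
    simp only [List.mem_singleton] at hx
    exact ⟨[], le_refl _, hx.trans hp⟩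
  | cons w l ih =>
    intro z y x hp hx
    rcases List.mem_cons.mp hx with h | h
    · exact ⟨w :: l, le_refl _, h ▸ hp⟩
    · obtain ⟨l', hlen, hp'⟩ := ih w y x hp.2 h
      exact ⟨l', hlen.trans (Nat.le_succ _), hp'⟩

lemma isPath_update {g : Fin k → X} {i : Fin k} {w : X} :
    ∀ (l : List X) (z y : X), IsPath ℓ g z l y → g i ∉ z :: l →
      IsPath ℓ (Function.update g i w) z l y := by
  intro l
  induction l with
  | nil => intro z y hp _; exact hp
  | cons v l ih =>
    intro z y hp hni
    obtain ⟨⟨j, hgj, hv⟩, htail⟩ := hp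
    have hji : j ≠ i := fun h => (hni (by simp [← hgj, h])).elim
    refine ⟨⟨j, by rw [Function.update_of_ne hji]; exact hgj, hv⟩, ?_⟩
    exact ih v y htail (fun h => hni (List.mem_cons_of_mem _ h))

lemma cntF_update (g : Fin k → X) (i : Fin k) (z : X) :
    cntF (Function.update g i z) + Finsupp.single (g i) 1
      = cntF g + Finsupp.single z 1 := by
  have h1 : (fun j => Finsupp.single (Function.update g i z j) 1)
      = Function.update (fun j => Finsupp.single (g j) 1) i (Finsupp.single z 1) := by
    funext j
    by_cases hj : j = i
    · subst hj; simp
    · simp [Function.update_of_ne hj]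
  have h2 : cntF (Function.update g i z)
      = Finsupp.single z 1 + ∑ j ∈ univ.erase i, Finsupp.single (g j) 1 := by
    rw [cntF, h1, Finset.sum_update_of_mem (mem_univ i)]
    congr 1
    exact Finset.sum_congr (by simp [Finset.sdiff_singleton_eq_erase]) fun _ _ => rfl
  have h3 : cntF g = Finsupp.single (g i) 1 + ∑ j ∈ univ.erase i, Finsupp.single (g j) 1 :=
    (Finset.add_sum_erase univ _ (mem_univ i)).symm
  rw [h2, h3]
  abel

/-- Key exchange lemma: a path from `x` to `y` lets us trade one occurrence of
`x` for one occurrence of `y` in the count vector, staying a valid choice. -/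
lemma exchange :
    ∀ (n : ℕ) (g : Fin k → X), (∀ i, g i ∈ ℓ i) → ∀ (x y : X) (l : List X),
      IsPath ℓ g x l y → l.length ≤ n →
      ∃ g' : Fin k → X, (∀ i, g' i ∈ ℓ i) ∧
        cntF g' + Finsupp.single x 1 = cntF g + Finsupp.single y 1 := by
  intro n
  induction n with
  | zero =>
    intro g hg x y l hp hlen
    rw [Nat.le_zero, List.length_eq_zero_iff] at hlen
    subst hlen
    exact ⟨g, hg, by rw [hp]⟩
  | succ n ih =>
    intro g hg x y l hp hlen
    match l, hp with
    | [], hp => exact ⟨g, hg, by rw [hp]⟩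
    | z :: l'', hp =>
      obtain ⟨⟨i, hgi, hz⟩, htail⟩ := hp
      by_cases hx : x ∈ z :: l''
      · obtain ⟨l₃, hlen₃, hp₃⟩ := isPath_suffix l'' z y x htail hx
        exact ih g hg x y l₃ hp₃
          (by simp only [List.length_cons] at hlen; omega)
      · set g₁ := Function.update g i z with hg₁
        have hvalid₁ : ∀ j, g₁ j ∈ ℓ j := by
          intro j
          by_cases hj : j = i
          · subst hj; rw [hg₁, Function.update_self]; exact hz
          · rw [hg₁, Function.update_of_ne hj]; exact hg j
        have htail₁ : IsPath ℓ g₁ z l'' y :=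
          isPath_update l'' z y htail (hgi ▸ hx)
        obtain ⟨g', hg', heq⟩ := ih g₁ hvalid₁ z y l'' htail₁ (by simp at hlen; omega)
        refine ⟨g', hg', ?_⟩
        have hcu := cntF_update g i z
        rw [hgi] at hcu
        have : cntF g' + Finsupp.single x 1 + Finsupp.single z 1
            = cntF g + Finsupp.single y 1 + Finsupp.single z 1 := by
          calc cntF g' + Finsupp.single x 1 + Finsupp.single z 1
              = (cntF g' + Finsupp.single z 1) + Finsupp.single x 1 := by abel
            _ = (cntF g₁ + Finsupp.single y 1) + Finsupp.single x 1 := by rw [heq]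
            _ = (cntF g₁ + Finsupp.single x 1) + Finsupp.single y 1 := by abel
            _ = (cntF g + Finsupp.single z 1) + Finsupp.single y 1 := by rw [hcu]
            _ = cntF g + Finsupp.single y 1 + Finsupp.single z 1 := by abel
        ext w
        have := congrArg (fun f : X →₀ ℕ => f w) this
        simp only [Finsupp.add_apply] at this ⊢
        omega

lemma isPath_snoc {g : Fin k → X} :
    ∀ (l : List X) (x z y : X), IsPath ℓ g x l z → rel ℓ g z y →
      IsPath ℓ g x (l ++ [y]) y := by
  intro l
  induction l with
  | nil => intro x z y hp hr; exact ⟨hp ▸ hr, rfl⟩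
  | cons w l ih =>
    intro x z y hp hr
    exact ⟨hp.1, ih w z y hp.2 hr⟩

end Paths
lemma deg_le_of_no_augment (θ : X → ℕ) {k : ℕ} {ℓ : Fin k → Finset X}
    {g h : Fin k → X} (hh : ∀ i, h i ∈ ℓ i) (R : X → Prop)
    (hovf : ∀ x, θ x - 1 < cntF g x → R x)
    (hclosed : ∀ (i : Fin k) (y : X), R (g i) → y ∈ ℓ i → R y)
    (hsat : ∀ y, R y → θ y - 1 ≤ cntF g y) :
    deg (red θ (cntF h)) ≤ deg (red θ (cntF g)) := by
  classical
  set V : Finset X := univ.image g ∪ univ.image h with hV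
  have hgV : (cntF g).support ⊆ V := (support_cntF_subset g).trans subset_union_left
  have hhV : (cntF h).support ⊆ V := (support_cntF_subset h).trans subset_union_right
  set A : Finset X := V.filter R with hA
  set B : Finset X := V.filter (fun x => ¬ R x) with hB
  -- degree as a sum over V, split over A and B
  have hsplitg : deg (red θ (cntF g))
      = (∑ x ∈ A, min (cntF g x) (θ x - 1)) + ∑ x ∈ B, min (cntF g x) (θ x - 1) := by
    rw [deg_eq_sum (red θ (cntF g)) ((support_red_subset θ _).trans hgV)]
    simp only [red_apply]
    exact (Finset.sum_filter_add_sum_filter_not V R _).symm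
  have hsplith : deg (red θ (cntF h))
      = (∑ x ∈ A, min (cntF h x) (θ x - 1)) + ∑ x ∈ B, min (cntF h x) (θ x - 1) := by
    rw [deg_eq_sum (red θ (cntF h)) ((support_red_subset θ _).trans hhV)]
    simp only [red_apply]
    exact (Finset.sum_filter_add_sum_filter_not V R _).symm
  -- on A, g is saturated
  have hgA : ∀ x ∈ A, min (cntF g x) (θ x - 1) = θ x - 1 := by
    intro x hx
    have := hsat x (mem_filter.mp hx).2
    omega
  -- on B, g does not overflow
  have hgB : ∀ x ∈ B, min (cntF g x) (θ x - 1) = cntF g x := by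
    intro x hx
    have hnR := (mem_filter.mp hx).2
    have : ¬ (θ x - 1 < cntF g x) := fun hlt => hnR (hovf x hlt)
    omega
  -- fiber counting over A
  have hfibg : ∑ x ∈ A, cntF g x = (univ.filter fun i => R (g i)).card := by
    rw [Finset.card_eq_sum_card_fiberwise (t := A)
      (f := g) (fun i hi => mem_filter.mpr ⟨mem_union_left _ (mem_image_of_mem g (mem_univ i)),
        (mem_filter.mp hi).2⟩)]
    refine Finset.sum_congr rfl fun x hx => ?_
    rw [cntF_apply]
    congr 1
    ext i
    simp only [mem_filter, mem_univ, true_and]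
    exact ⟨fun hgi => ⟨hgi ▸ (mem_filter.mp hx).2 , hgi⟩, fun ⟨_, hgi⟩ => hgi⟩
  have hfibh : ∑ x ∈ A, cntF h x = (univ.filter fun i => R (h i)).card := by
    rw [Finset.card_eq_sum_card_fiberwise (t := A)
      (f := h) (fun i hi => mem_filter.mpr ⟨mem_union_right _ (mem_image_of_mem h (mem_univ i)),
        (mem_filter.mp hi).2⟩)]
    refine Finset.sum_congr rfl fun x hx => ?_
    rw [cntF_apply]
    congr 1
    ext i
    simp only [mem_filter, mem_univ, true_and]
    exact ⟨fun hgi => ⟨hgi ▸ (mem_filter.mp hx).2 , hgi⟩, fun ⟨_, hgi⟩ => hgi⟩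
  -- g-saturated indices map into R for h as well
  have hmono : ∑ x ∈ A, cntF g x ≤ ∑ x ∈ A, cntF h x := by
    rw [hfibg, hfibh]
    exact Finset.card_le_card (fun i hi => mem_filter.mpr
      ⟨mem_univ i, hclosed i (h i) (mem_filter.mp hi).2 (hh i)⟩)
  -- totals
  have htotg : (∑ x ∈ A, cntF g x) + ∑ x ∈ B, cntF g x = k := by
    rw [Finset.sum_filter_add_sum_filter_not V R]
    rw [← deg_eq_sum (cntF g) hgV, deg_cntF]
  have htoth : (∑ x ∈ A, cntF h x) + ∑ x ∈ B, cntF h x = k := by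
    rw [Finset.sum_filter_add_sum_filter_not V R]
    rw [← deg_eq_sum (cntF h) hhV, deg_cntF]
  have hBle : ∑ x ∈ B, cntF h x ≤ ∑ x ∈ B, cntF g x := by omega
  -- combine
  rw [hsplitg, hsplith]
  have h1 : ∑ x ∈ A, min (cntF h x) (θ x - 1) ≤ ∑ x ∈ A, min (cntF g x) (θ x - 1) := by
    rw [Finset.sum_congr rfl hgA]
    exact Finset.sum_le_sum fun x _ => min_le_right _ _
  have h2 : ∑ x ∈ B, min (cntF h x) (θ x - 1) ≤ ∑ x ∈ B, min (cntF g x) (θ x - 1) := by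
    rw [Finset.sum_congr rfl hgB]
    exact le_trans (Finset.sum_le_sum fun x _ => min_le_left _ _) hBle
  omega
/-- KEY CLAIM: every maximal monomial of a normal form has maximal degree. -/
lemma deg_of_maxMon (θ : X → ℕ) {k : ℕ} {ℓ : Fin k → Finset X}
    (hℓ : ∀ i, (ℓ i).Nonempty) {m : X →₀ ℕ} (hm : m ∈ MaxMon (NfSet θ ℓ)) :
    deg m = maxDeg (NfSet θ ℓ) := by
  classical
  obtain ⟨g, hg, rfl⟩ := (mem_nfSet_iff θ ℓ m).mp hm.1
  set R : X → Prop := fun y => ∃ (x : X) (l : List X),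
    θ x - 1 < cntF g x ∧ IsPath ℓ g x l y with hR
  by_cases hcase : ∃ y, R y ∧ cntF g y < θ y - 1
  · -- augmenting path exists: contradiction with maximality
    exfalso
    obtain ⟨y, ⟨x, l, hovf, hpath⟩, hund⟩ := hcase
    obtain ⟨g', hg', heq⟩ := exchange l.length g hg x y l hpath le_rfl
    have hxy : x ≠ y := fun hxyeq => by rw [hxyeq] at hovf; omega
    have hval : ∀ w, cntF g' w + (Finsupp.single x 1) w
        = cntF g w + (Finsupp.single y 1) w := by
      intro w
      have := congrArg (fun f : X →₀ ℕ => f w) heq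
      simpa using this
    have hle : red θ (cntF g) ≤ red θ (cntF g') := by
      rw [Finsupp.le_def]
      intro w
      rw [red_apply, red_apply]
      have := hval w
      by_cases hwx : w = x
      · subst hwx
        rw [Finsupp.single_eq_same, Finsupp.single_eq_of_ne' (Ne.symm hxy)] at this
        omega
      · by_cases hwy : w = y
        · subst hwy
          rw [Finsupp.single_eq_of_ne' (fun hh => hwx hh.symm), Finsupp.single_eq_same] at this
          omega
        · rw [Finsupp.single_eq_of_ne' (fun hh => hwx hh.symm),
            Finsupp.single_eq_of_ne' (fun hh => hwy hh.symm)] at this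
          omega
    have hmem' : red θ (cntF g') ∈ NfSet θ ℓ := (mem_nfSet_iff θ ℓ _).mpr ⟨g', hg', rfl⟩
    have heqm := hm.2 _ hmem' hle
    have := congrArg (fun f : X →₀ ℕ => f y) heqm
    simp only [red_apply] at this
    have hvy := hval y
    rw [Finsupp.single_eq_of_ne' hxy, Finsupp.single_eq_same] at hvy
    omega
  · -- no augmenting path: counting bound shows degree is maximal
    push_neg at hcase
    have hsat : ∀ y, R y → θ y - 1 ≤ cntF g y := fun y hy => hcase y hy
    have hovf : ∀ x, θ x - 1 < cntF g x → R x := fun x hx => ⟨x, [], hx, rfl⟩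
    have hclosed : ∀ (i : Fin k) (y : X), R (g i) → y ∈ ℓ i → R y := by
      rintro i y ⟨x, l, hx, hpath⟩ hyi
      exact ⟨x, l ++ [y], hx, isPath_snoc l x (g i) y hpath ⟨i, rfl, hyi⟩⟩
    refine le_antisymm (le_maxDeg θ hm.1) ?_
    refine maxDeg_le θ (nfSet_nonempty θ hℓ) ?_
    intro m' hm'
    obtain ⟨h, hh, rfl⟩ := (mem_nfSet_iff θ ℓ m').mp hm'
    exact deg_le_of_no_augment θ hh R hovf hclosed hsat
lemma maxMon_of_deg (θ : X → ℕ) {k : ℕ} {ℓ : Fin k → Finset X} {m : X →₀ ℕ}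
    (hm : m ∈ NfSet θ ℓ) (hd : maxDeg (NfSet θ ℓ) ≤ deg m) :
    m ∈ MaxMon (NfSet θ ℓ) :=
  ⟨hm, fun m' hm' hle => eq_of_le_of_deg_le hle ((le_maxDeg θ hm').trans hd)⟩

end NfAux


open NfAux

/-- if appending the linear factor `L` to the product `t = ℓ₁⋯ℓ_k`
of linear terms over threshold variables does not change the maximal degree of
the normal form, then it does not change the set of maximal monomials. -/
theorem maxMon_stable_of_maxDeg_stable
    {X : Type*} [DecidableEq X] (θ : X → ℕ) (hθ : ∀ x, 2 ≤ θ x)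
    {k : ℕ} (ℓ : Fin k → Finset X) (hℓ : ∀ i, (ℓ i).Nonempty)
    (L : Finset X) (hL : L.Nonempty)
    (hdeg : maxDeg (NfSet θ (Fin.snoc ℓ L)) = maxDeg (NfSet θ ℓ)) :
    MaxMon (NfSet θ (Fin.snoc ℓ L)) = MaxMon (NfSet θ ℓ) := by
  classical
  have hℓ' : ∀ i : Fin (k + 1), ((Fin.snoc ℓ L : Fin (k + 1) → Finset X) i).Nonempty := by
    intro i
    induction i using Fin.lastCases with
    | last => simpa using hL
    | cast j => simpa using hℓ j
  ext m
  constructor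
  · -- MaxMon S' ⊆ MaxMon S
    intro hm
    have hdm : deg m = maxDeg (NfSet θ ℓ) := by
      rw [← hdeg]; exact deg_of_maxMon θ hℓ' hm
    obtain ⟨g, hg, y, hyL, hmend⟩ := (mem_nfSet_snoc_iff θ ℓ L m).mp hm.1
    by_cases hc : cntF g y < θ y - 1
    · -- nontrivial bump
      have hmeq : m = red θ (cntF g) + Finsupp.single y 1 := by
        rw [hmend, red_add_single_of_lt θ hc]
      have hm₀ : red θ (cntF g) ∈ NfSet θ ℓ := (mem_nfSet_iff θ ℓ _).mpr ⟨g, hg, rfl⟩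
      obtain ⟨m₁, hm₁max, hm₀le⟩ := exists_maxMon_above (nfSet_finite θ ℓ) hm₀
      have hdm₁ : deg m₁ = maxDeg (NfSet θ ℓ) := deg_of_maxMon θ hℓ hm₁max
      obtain ⟨g₁, hg₁, rfl⟩ := (mem_nfSet_iff θ ℓ m₁).mp hm₁max.1
      by_cases h2 : cntF g₁ y < θ y - 1
      · -- would give a monomial of degree D+1 in S' : contradiction
        exfalso
        have hmem₂ : red θ (cntF g₁) + Finsupp.single y 1 ∈ NfSet θ (Fin.snoc ℓ L) := by
          rw [← red_add_single_of_lt θ h2]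
          exact (mem_nfSet_snoc_iff θ ℓ L _).mpr ⟨g₁, hg₁, y, hyL, rfl⟩
        have := le_maxDeg θ hmem₂
        rw [deg_add, deg_single, hdeg] at this
        omega
      · -- m₁ saturated at y : m ≤ m₁ and m₁ ∈ S', so m = m₁
        push_neg at h2
        have hm₁S' : red θ (cntF g₁) ∈ NfSet θ (Fin.snoc ℓ L) := by
          rw [← red_add_single_of_ge θ h2]
          exact (mem_nfSet_snoc_iff θ ℓ L _).mpr ⟨g₁, hg₁, y, hyL, rfl⟩
        have hle : m ≤ red θ (cntF g₁) := by
          rw [hmeq, Finsupp.le_def]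
          intro w
          rw [Finsupp.add_apply]
          have hw := Finsupp.le_def.mp hm₀le w
          by_cases hwy : w = y
          · subst hwy
            rw [Finsupp.single_eq_same, red_apply, red_apply] at *
            omega
          · rw [Finsupp.single_eq_of_ne' fun hh => hwy hh.symm]
            omega
        have : m = red θ (cntF g₁) := hm.2 _ hm₁S' hle
        rw [this]
        exact hm₁max
    · -- trivial bump: m is already in S and has maximal degree there
      push_neg at hc
      have hmS : m ∈ NfSet θ ℓ := by
        rw [hmend, red_add_single_of_ge θ hc]
        exact (mem_nfSet_iff θ ℓ _).mpr ⟨g, hg, rfl⟩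
      exact maxMon_of_deg θ hmS (le_of_eq hdm.symm)
  · -- MaxMon S ⊆ MaxMon S'
    intro hm
    have hdm : deg m = maxDeg (NfSet θ ℓ) := deg_of_maxMon θ hℓ hm
    obtain ⟨g, hg, rfl⟩ := (mem_nfSet_iff θ ℓ m).mp hm.1
    obtain ⟨y, hyL⟩ := hL
    have hmem' : red θ (cntF g + Finsupp.single y 1) ∈ NfSet θ (Fin.snoc ℓ L) :=
      (mem_nfSet_snoc_iff θ ℓ L _).mpr ⟨g, hg, y, hyL, rfl⟩
    have hle : red θ (cntF g) ≤ red θ (cntF g + Finsupp.single y 1) :=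
      red_le_red_add_single θ _ y
    have hdle : deg (red θ (cntF g + Finsupp.single y 1)) ≤ deg (red θ (cntF g)) := by
      have := le_maxDeg θ hmem'
      rw [hdeg] at this
      omega
    have heq : red θ (cntF g) = red θ (cntF g + Finsupp.single y 1) :=
      eq_of_le_of_deg_le hle hdle
    refine maxMon_of_deg θ (heq ▸ hmem') ?_
    rw [← hdeg] at hdm
    exact le_of_eq hdm.symm
end

section
/- In an idempotent commutative semiring over threshold variables with axioms x^{θ(x)} = x^{θ(x)−1} (θ(x) ≥ 2), every product t of linear terms of length exceeding Σ_x (θ(x)−1) has a strict subproduct t' such that for every intermediate subproduct t'' with t' ⪯ t'' ⪯ t, the maximal monomials of nf(t'') coincide with those of nf(t). -/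
/-- Normal form of a product of linear terms, given as a list `l` of factors
(each a nonempty sum of threshold variables, `x^{θ x} = x^{θ x − 1}`): the set
of reduced monomials obtained by choosing one variable from each factor and
capping multiplicities at `θ x − 1`. -/
def NfSetL {X : Type*} [DecidableEq X] (θ : X → ℕ) (l : List (Finset X)) :
    Set (X →₀ ℕ) :=
  {m | ∃ c : List X, List.Forall₂ (· ∈ ·) c l ∧ ∀ x, m x = min (c.count x) (θ x - 1)}

namespace TCAux

variable {X : Type*} [DecidableEq X]

/-- number of factors meeting `S` -/
def Dl (l : List (Finset X)) (S : Finset X) : ℕ :=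
  l.countP (fun W => decide (W ∩ S).Nonempty)

lemma sum_count_eq_countP (c : List X) (U : Finset X) :
    ∑ y ∈ U, c.count y = c.countP (fun a => decide (a ∈ U)) := by
  induction c with
  | nil => simp
  | cons a c ih =>
    have h1 : ∀ y, (a :: c).count y = c.count y + if a = y then 1 else 0 := by
      intro y; simp [List.count_cons]
    simp only [h1, Finset.sum_add_distrib, ih, List.countP_cons]
    have h2 : ∑ y ∈ U, (if a = y then 1 else 0) = if a ∈ U then 1 else 0 :=
      Finset.sum_ite_eq U a (fun _ => 1)
    rw [h2]
    by_cases h : a ∈ U <;> simp [h]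

lemma countP_le_of_forall₂ {R : X → Finset X → Prop} {c : List X} {l : List (Finset X)}
    (h : List.Forall₂ R c l) (p : X → Bool) (q : Finset X → Bool)
    (himp : ∀ a W, R a W → p a = true → q W = true) :
    c.countP p ≤ l.countP q := by
  induction h with
  | nil => simp
  | @cons a W c' l' hr htail ih =>
    simp only [List.countP_cons]
    by_cases hp : p a = true
    · rw [if_pos hp, if_pos (himp a W hr hp)]
      omega
    · rw [if_neg hp]
      split <;> omega

lemma forall₂_of_countP_eq {R : X → Finset X → Prop} {c : List X} {l : List (Finset X)}
    (h : List.Forall₂ R c l) (p : X → Bool) (q : Finset X → Bool)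
    (himp : ∀ a W, R a W → p a = true → q W = true)
    (heq : c.countP p = l.countP q) :
    List.Forall₂ (fun a W => R a W ∧ (q W = true → p a = true)) c l := by
  induction h with
  | nil => exact List.Forall₂.nil
  | @cons a W c' l' hr htail ih =>
    have hle := countP_le_of_forall₂ htail p q himp
    simp only [List.countP_cons] at heq
    have hpa : q W = true → p a = true := by
      intro hq
      by_contra hp
      simp [hp, hq] at heq
      omega
    have htaileq : c'.countP p = l'.countP q := by
      by_cases hq : q W = true
      · simp [hq, hpa hq] at heq; omega
      · have hp : ¬ p a = true := fun hp => hq (himp a W hr hp)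
        simp [hq, hp] at heq; omega
    exact List.Forall₂.cons ⟨hr, hpa⟩ (ih htaileq)

lemma countP_split (l : List (Finset X)) (p q r : Finset X → Bool)
    (hiff : ∀ a, p a = true ↔ (q a = true ∨ r a = true))
    (hdisj : ∀ a, ¬(q a = true ∧ r a = true)) :
    l.countP p = l.countP q + l.countP r := by
  induction l with
  | nil => simp
  | cons a l ih =>
    simp only [List.countP_cons, ih]
    by_cases hq : q a = true
    · have hp : p a = true := (hiff a).2 (Or.inl hq)
      have hr : ¬ r a = true := fun hr => hdisj a ⟨hq, hr⟩
      simp [hp, hq, hr]; omega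
    · by_cases hr : r a = true
      · have hp : p a = true := (hiff a).2 (Or.inr hr)
        simp [hp, hq, hr]; omega
      · have hp : ¬ p a = true := fun hp => by rcases (hiff a).1 hp with h | h <;> simp_all
        simp [hp, hq, hr]

lemma exists_transversal {l : List (Finset X)} (hne : ∀ W ∈ l, W.Nonempty) :
    ∃ c, List.Forall₂ (· ∈ ·) c l := by
  induction l with
  | nil => exact ⟨[], List.Forall₂.nil⟩
  | cons W l ih =>
    obtain ⟨c, hc⟩ := ih (fun V hV => hne V (List.mem_cons_of_mem _ hV))
    obtain ⟨w, hw⟩ := hne W List.mem_cons_self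
    exact ⟨w :: c, List.Forall₂.cons hw hc⟩

/-- basic counting bound: for a transversal, `∑_{y∈U} min (count y) (θ y - 1) ≤ Dl l U`. -/
lemma basic_bound (θ : X → ℕ) {c : List X} {l : List (Finset X)}
    (hc : List.Forall₂ (· ∈ ·) c l) (U : Finset X) :
    ∑ y ∈ U, min (c.count y) (θ y - 1) ≤ Dl l U := by
  calc ∑ y ∈ U, min (c.count y) (θ y - 1)
      ≤ ∑ y ∈ U, c.count y := Finset.sum_le_sum (fun y _ => min_le_left _ _)
    _ = c.countP (fun a => decide (a ∈ U)) := sum_count_eq_countP c U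
    _ ≤ Dl l U := countP_le_of_forall₂ hc _ _ (by
        intro a W ha hp
        simp only [decide_eq_true_eq] at hp ⊢
        exact ⟨a, Finset.mem_inter.2 ⟨ha, hp⟩⟩)



def pick (sel : Finset X → Bool) : List (Finset X) → List X → List X → List X
  | W :: l, a :: c₁, b :: c₂ => (if sel W then a else b) :: pick sel l c₁ c₂
  | _, _, _ => []

def pickSel (sel : Finset X → Bool) : List (Finset X) → List X → List X
  | W :: l, a :: c₁ => if sel W then a :: pickSel sel l c₁ else pickSel sel l c₁
  | _, _ => []

lemma pick_forall₂ (sel : Finset X → Bool) {l : List (Finset X)} {c₁ c₂ : List X}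
    (h₁ : List.Forall₂ (· ∈ ·) c₁ l) (h₂ : List.Forall₂ (· ∈ ·) c₂ l) :
    List.Forall₂ (· ∈ ·) (pick sel l c₁ c₂) l := by
  induction l generalizing c₁ c₂ with
  | nil => cases h₁; exact List.Forall₂.nil
  | cons W l ih =>
    cases h₁ with | cons ha h₁' =>
    cases h₂ with | cons hb h₂' =>
    simp only [pick]
    exact List.Forall₂.cons (by split <;> assumption) (ih h₁' h₂')

lemma pick_count_T (sel : Finset X → Bool) {l : List (Finset X)} {c₁ c₂ : List X}
    (h₁ : List.Forall₂ (· ∈ ·) c₁ l) (h₂ : List.Forall₂ (· ∈ ·) c₂ l)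
    (z : X) (hz : ∀ W, sel W = true → z ∉ W) :
    (pick sel l c₁ c₂).count z = c₂.count z := by
  induction l generalizing c₁ c₂ with
  | nil => cases h₁; cases h₂; rfl
  | cons W l ih =>
    cases h₁ with | cons ha h₁' =>
    cases h₂ with | cons hb h₂' =>
    rename_i a c₁' b c₂'
    simp only [pick]
    by_cases hs : sel W = true
    · have haz : ¬ (z = a) := fun h => hz W hs (by rw [h]; exact ha)
      have hbz : ¬ (z = b) := fun h => hz W hs (by rw [h]; exact hb)
      rw [if_pos hs]
      simp [List.count_cons, haz, hbz, Ne.symm haz, Ne.symm hbz, ih h₁' h₂']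
    · rw [if_neg hs]
      simp [List.count_cons, ih h₁' h₂']

lemma pickSel_count_le_pick (sel : Finset X → Bool) {l : List (Finset X)} {c₁ c₂ : List X}
    (h₁ : List.Forall₂ (· ∈ ·) c₁ l) (h₂ : List.Forall₂ (· ∈ ·) c₂ l) (y : X) :
    (pickSel sel l c₁).count y ≤ (pick sel l c₁ c₂).count y := by
  induction l generalizing c₁ c₂ with
  | nil => cases h₁; simp [pickSel, pick]
  | cons W l ih =>
    cases h₁ with | cons ha h₁' =>
    cases h₂ with | cons hb h₂' =>
    simp only [pick, pickSel]
    by_cases hs : sel W = true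
    · rw [if_pos hs, if_pos hs]
      simp only [List.count_cons]
      have := ih h₁' h₂'
      omega
    · rw [if_neg hs, if_neg hs]
      simp only [List.count_cons]
      have := ih h₁' h₂'
      split <;> omega

lemma pickSel_count_le (sel : Finset X → Bool) (l : List (Finset X)) (c₁ : List X) (y : X) :
    (pickSel sel l c₁).count y ≤ c₁.count y := by
  induction l generalizing c₁ with
  | nil => simp [pickSel]
  | cons W l ih =>
    cases c₁ with
    | nil => simp [pickSel]
    | cons a c =>
      simp only [pickSel, List.count_cons]
      by_cases hs : sel W = true
      · rw [if_pos hs]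
        simp only [List.count_cons]
        have := ih c
        omega
      · rw [if_neg hs]
        have := ih c
        split <;> omega

lemma pickSel_length (sel : Finset X → Bool) {l : List (Finset X)} {c₁ : List X}
    (h₁ : List.Forall₂ (· ∈ ·) c₁ l) :
    (pickSel sel l c₁).length = l.countP sel := by
  induction l generalizing c₁ with
  | nil => cases h₁; rfl
  | cons W l ih =>
    cases h₁ with | cons ha h₁' =>
    simp only [pickSel, List.countP_cons]
    by_cases hs : sel W = true
    · rw [if_pos hs, if_pos hs]
      simp [ih h₁']
    · rw [if_neg hs, if_neg hs]
      simp [ih h₁']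

lemma pickSel_mem (sel : Finset X → Bool) {P : X → Prop} {l : List (Finset X)} {c₁ : List X}
    {R : X → Finset X → Prop}
    (h₁ : List.Forall₂ R c₁ l) (hP : ∀ a W, R a W → sel W = true → P a) :
    ∀ x ∈ pickSel sel l c₁, P x := by
  induction l generalizing c₁ with
  | nil => cases h₁; simp [pickSel]
  | cons W l ih =>
    cases h₁ with | cons ha h₁' =>
    simp only [pickSel]
    by_cases hs : sel W = true
    · rw [if_pos hs]
      intro x hx
      rcases List.mem_cons.1 hx with rfl | hx
      · exact hP _ _ ha hs
      · exact ih h₁' x hx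
    · rw [if_neg hs]
      exact ih h₁'



lemma tight_union (θ : X → ℕ) {l : List (Finset X)} {S T : Finset X} {c₁ c₂ : List X}
    (h₁ : List.Forall₂ (· ∈ ·) c₁ l) (h₂ : List.Forall₂ (· ∈ ·) c₂ l)
    (t₁ : ∑ y ∈ S, min (c₁.count y) (θ y - 1) = Dl l S)
    (t₂ : ∑ y ∈ T, min (c₂.count y) (θ y - 1) = Dl l T) :
    ∃ c₃, List.Forall₂ (· ∈ ·) c₃ l ∧
      ∑ y ∈ S ∪ T, min (c₃.count y) (θ y - 1) = Dl l (S ∪ T) := by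
  classical
  set sel : Finset X → Bool := fun W => decide (W ∩ S).Nonempty && decide (W ∩ T = ∅) with hsel
  have hselS : ∀ W, sel W = true → (W ∩ S).Nonempty := by
    intro W hW; rw [hsel] at hW; simp only [Bool.and_eq_true, decide_eq_true_eq] at hW; exact hW.1
  have hselT : ∀ W, sel W = true → W ∩ T = ∅ := by
    intro W hW; rw [hsel] at hW; simp only [Bool.and_eq_true, decide_eq_true_eq] at hW; exact hW.2
  -- consequences of tightness of S for c₁
  have himp : ∀ (a : X) (W : Finset X), a ∈ W → decide (a ∈ S) = true →
      decide ((W ∩ S).Nonempty) = true := by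
    intro a W ha hp
    simp only [decide_eq_true_eq] at hp ⊢
    exact ⟨a, Finset.mem_inter.2 ⟨ha, hp⟩⟩
  have hmono : ∀ y ∈ S, min (c₁.count y) (θ y - 1) ≤ c₁.count y := fun y _ => min_le_left _ _
  have hs1 : ∑ y ∈ S, min (c₁.count y) (θ y - 1) ≤ ∑ y ∈ S, c₁.count y :=
    Finset.sum_le_sum hmono
  have hs2 : ∑ y ∈ S, c₁.count y = c₁.countP (fun a => decide (a ∈ S)) :=
    sum_count_eq_countP c₁ S
  have hs3 : c₁.countP (fun a => decide (a ∈ S)) ≤ Dl l S :=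
    countP_le_of_forall₂ h₁ _ _ himp
  have e1 : ∑ y ∈ S, min (c₁.count y) (θ y - 1) = ∑ y ∈ S, c₁.count y := by omega
  have e2 : c₁.countP (fun a => decide (a ∈ S)) = Dl l S := by omega
  have hle1 : ∀ y ∈ S, c₁.count y ≤ θ y - 1 := by
    intro y hy
    have := (Finset.sum_eq_sum_iff_of_le hmono).1 e1 y hy
    exact min_eq_left_iff.mp this
  have hin1 : List.Forall₂
      (fun a W => a ∈ W ∧ (decide ((W ∩ S).Nonempty) = true → decide (a ∈ S) = true)) c₁ l :=
    forall₂_of_countP_eq h₁ _ _ himp e2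
  -- the combined transversal
  refine ⟨pick sel l c₁ c₂, pick_forall₂ sel h₁ h₂, ?_⟩
  have hzT : ∀ z ∈ T, ∀ W, sel W = true → z ∉ W := by
    intro z hz W hW hzW
    have h := hselT W hW
    have : z ∈ W ∩ T := Finset.mem_inter.2 ⟨hzW, hz⟩
    rw [h] at this
    exact absurd this (Finset.notMem_empty z)
  have fT : ∀ z ∈ T, (pick sel l c₁ c₂).count z = c₂.count z :=
    fun z hz => pick_count_T sel h₁ h₂ z (hzT z hz)
  -- split the sum
  have hunion : T ∪ (S \ T) = S ∪ T := by
    rw [Finset.union_sdiff_self_eq_union, Finset.union_comm]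
  have hdisj : Disjoint T (S \ T) := Finset.disjoint_sdiff
  have hsumT : ∑ y ∈ T, min ((pick sel l c₁ c₂).count y) (θ y - 1) = Dl l T := by
    rw [← t₂]
    exact Finset.sum_congr rfl (fun y hy => by rw [fT y hy])
  -- lower bound on the S \ T part
  have hu_mem : ∀ x ∈ pickSel sel l c₁, x ∈ S \ T := by
    refine pickSel_mem sel hin1 ?_
    intro a W ⟨haW, haS⟩ hW
    have h1 : a ∈ S := by simpa using haS (by simpa using hselS W hW)
    have h2 : a ∉ T := fun haT => hzT a haT W hW haW
    exact Finset.mem_sdiff.2 ⟨h1, h2⟩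
  have hlenu : (pickSel sel l c₁).length = l.countP sel := pickSel_length sel h₁
  have hsumu : ∑ y ∈ S \ T, (pickSel sel l c₁).count y = l.countP sel := by
    rw [sum_count_eq_countP, ← hlenu]
    exact List.countP_eq_length.2 (fun a ha => by simpa using hu_mem a ha)
  have hsumST : ∑ y ∈ S \ T, min ((pick sel l c₁ c₂).count y) (θ y - 1) ≥ l.countP sel := by
    rw [← hsumu]
    refine Finset.sum_le_sum ?_
    intro y hy
    have hy' : y ∈ S := (Finset.mem_sdiff.1 hy).1
    have hub : (pickSel sel l c₁).count y ≤ θ y - 1 :=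
      le_trans (pickSel_count_le sel l c₁ y) (hle1 y hy')
    exact le_min (pickSel_count_le_pick sel h₁ h₂ y) hub
  -- Dl splits
  have hD : Dl l (S ∪ T) = Dl l T + l.countP sel := by
    refine countP_split l _ _ _ ?_ ?_
    · intro W
      simp only [hsel, Bool.and_eq_true, decide_eq_true_eq]
      constructor
      · rintro ⟨y, hy⟩
        rw [Finset.mem_inter] at hy
        by_cases hT : (W ∩ T).Nonempty
        · exact Or.inl hT
        · rcases Finset.mem_union.1 hy.2 with hyS | hyT
          · exact Or.inr ⟨⟨y, Finset.mem_inter.2 ⟨hy.1, hyS⟩⟩,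
              Finset.not_nonempty_iff_eq_empty.1 hT⟩
          · exact absurd ⟨y, Finset.mem_inter.2 ⟨hy.1, hyT⟩⟩ hT
      · rintro (⟨y, hy⟩ | ⟨⟨y, hy⟩, -⟩)
        · rw [Finset.mem_inter] at hy
          exact ⟨y, Finset.mem_inter.2 ⟨hy.1, Finset.mem_union.2 (Or.inr hy.2)⟩⟩
        · rw [Finset.mem_inter] at hy
          exact ⟨y, Finset.mem_inter.2 ⟨hy.1, Finset.mem_union.2 (Or.inl hy.2)⟩⟩
    · intro W
      simp only [hsel, Bool.and_eq_true, decide_eq_true_eq]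
      rintro ⟨⟨y, hy⟩, ⟨-, hWT⟩⟩
      rw [hWT] at hy
      exact absurd hy (Finset.notMem_empty y)
  -- conclude
  refine le_antisymm (basic_bound θ (pick_forall₂ sel h₁ h₂) (S ∪ T)) ?_
  rw [← hunion, Finset.sum_union hdisj, hunion, hD, hsumT]
  omega



lemma countP_ofFn {α : Type*} : ∀ {n : ℕ} (g : Fin n → α) (p : α → Bool),
    (List.ofFn g).countP p =
      ((Finset.univ : Finset (Fin n)).filter (fun j => p (g j) = true)).card := by
  intro n
  induction n with
  | zero => intro g p; simp
  | succ n ih =>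
    intro g p
    rw [List.ofFn_succ, List.countP_cons, ih]
    have hsplit : ((Finset.univ : Finset (Fin (n+1))).filter (fun j => p (g j) = true)).card
        = (if p (g 0) = true then 1 else 0)
          + ((Finset.univ : Finset (Fin n)).filter (fun j => p (g j.succ) = true)).card := by
      rw [Finset.card_filter, Fin.sum_univ_succ, ← Finset.card_filter]
    rw [hsplit]
    omega

lemma countP_eq_card_get {α : Type*} (l : List α) (p : α → Bool) :
    l.countP p =
      ((Finset.univ : Finset (Fin l.length)).filter (fun j => p (l.get j) = true)).card := by
  conv_lhs => rw [← List.ofFn_get l]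
  rw [countP_ofFn]

lemma hall_transversal (l' : List (Finset X)) (hne' : ∀ W ∈ l', W.Nonempty) (d : X → ℕ)
    [Fintype X]
    (hd : ∀ S : Finset X, ∑ y ∈ S, d y ≤ Dl l' S) :
    ∃ c, List.Forall₂ (· ∈ ·) c l' ∧ ∀ y, d y ≤ c.count y := by
  classical
  set n := l'.length with hn
  set t : ((y : X) × Fin (d y)) → Finset (Fin n) :=
    fun p => Finset.univ.filter (fun j => p.1 ∈ l'.get j) with ht
  have hall : ∀ s : Finset ((y : X) × Fin (d y)), s.card ≤ (s.biUnion t).card := by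
    intro s
    set S := s.image Sigma.fst with hS
    have h1 : s.card ≤ ∑ y ∈ S, d y := by
      have hsub : s ⊆ S.sigma (fun y => (Finset.univ : Finset (Fin (d y)))) := by
        intro p hp
        exact Finset.mem_sigma.2 ⟨Finset.mem_image_of_mem _ hp, Finset.mem_univ _⟩
      calc s.card ≤ (S.sigma (fun y => (Finset.univ : Finset (Fin (d y))))).card :=
            Finset.card_le_card hsub
        _ = ∑ y ∈ S, d y := by rw [Finset.card_sigma]; simp
    have h2 : Dl l' S ≤ (s.biUnion t).card := by
      rw [Dl, countP_eq_card_get]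
      refine Finset.card_le_card ?_
      intro j hj
      simp only [Finset.mem_filter, decide_eq_true_eq] at hj
      obtain ⟨y, hy⟩ := hj.2
      rw [Finset.mem_inter] at hy
      have : y ∈ S := hy.2
      obtain ⟨p, hp, hpy⟩ := Finset.mem_image.1 this
      refine Finset.mem_biUnion.2 ⟨p, hp, ?_⟩
      rw [ht]
      exact Finset.mem_filter.2 ⟨Finset.mem_univ _, by rw [hpy]; exact hy.1⟩
    exact le_trans h1 (le_trans (hd S) h2)
  obtain ⟨f, hfinj, hft⟩ := (Finset.all_card_le_biUnion_card_iff_exists_injective t).1 hall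
  have hfm : ∀ p, p.1 ∈ l'.get (f p) := by
    intro p
    have := hft p
    rw [ht] at this
    exact (Finset.mem_filter.1 this).2
  set g : Fin n → X := fun j =>
    if h : ∃ p, f p = j then (Classical.choose h).1
    else (hne' (l'.get j) (l'.get_mem j)).choose with hg
  have hgmem : ∀ j : Fin n, g j ∈ l'.get j := by
    intro j
    simp only [hg]
    split
    · next h =>
      have hthis := hfm (Classical.choose h)
      rw [Classical.choose_spec h] at hthis
      exact hthis
    · next h =>
      exact (hne' (l'.get j) (l'.get_mem j)).choose_spec
  refine ⟨List.ofFn g, ?_, ?_⟩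
  · rw [List.forall₂_iff_get]
    refine ⟨by simp [hn], ?_⟩
    intro i hi1 hi2
    rw [List.get_ofFn]
    have := hgmem ⟨i, hi2⟩
    convert this using 2 <;> simp
  · intro y
    have hcnt : (List.ofFn g).count y =
        ((Finset.univ : Finset (Fin n)).filter (fun j => (g j == y) = true)).card := by
      rw [List.count, countP_ofFn]
    rw [hcnt]
    have hinj : ∀ k : Fin (d y), f ⟨y, k⟩ ∈
        (Finset.univ : Finset (Fin n)).filter (fun j => (g j == y) = true) := by
      intro k
      refine Finset.mem_filter.2 ⟨Finset.mem_univ _, ?_⟩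
      have hgy : g (f ⟨y, k⟩) = y := by
        simp only [hg]
        split
        · next h' =>
          have hch : Classical.choose h' = ⟨y, k⟩ := hfinj (Classical.choose_spec h')
          rw [hch]
        · next h' => exact absurd ⟨⟨y, k⟩, rfl⟩ h'
      simp [hgy]
    calc d y = (Finset.univ : Finset (Fin (d y))).card := by simp
      _ ≤ _ := by
        refine Finset.card_le_card_of_injOn (fun k => f ⟨y, k⟩) (fun k _ => hinj k) ?_
        intro k₁ _ k₂ _ hk
        have := hfinj hk
        simpa using this




noncomputable def mkMon [Fintype X] (θ : X → ℕ) (c : List X) : X →₀ ℕ :=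
  Finsupp.equivFunOnFinite.symm (fun y => min (c.count y) (θ y - 1))

lemma mkMon_apply [Fintype X] (θ : X → ℕ) (c : List X) (y : X) :
    mkMon θ c y = min (c.count y) (θ y - 1) := rfl

lemma mkMon_mem [Fintype X] (θ : X → ℕ) {c : List X} {l : List (Finset X)}
    (hc : List.Forall₂ (· ∈ ·) c l) : mkMon θ c ∈ NfSetL θ l :=
  ⟨c, hc, fun y => rfl⟩

lemma sum_le_N [Fintype X] (θ : X → ℕ) {l : List (Finset X)} {m : X →₀ ℕ}
    (hm : m ∈ NfSetL θ l) : ∑ x, m x ≤ ∑ x, (θ x - 1) := by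
  obtain ⟨c, -, hcm⟩ := hm
  refine Finset.sum_le_sum ?_
  intro x _
  rw [hcm x]
  exact min_le_right _ _

lemma exists_max [Fintype X] (θ : X → ℕ) {l : List (Finset X)} {m : X →₀ ℕ}
    (hm : m ∈ NfSetL θ l) :
    ∃ m', m' ∈ MaxMon (NfSetL θ l) ∧ m ≤ m' := by
  suffices H : ∀ k (m : X →₀ ℕ), m ∈ NfSetL θ l → ∑ x, (θ x - 1) ≤ (∑ x, m x) + k →
      ∃ m', m' ∈ MaxMon (NfSetL θ l) ∧ m ≤ m' by
    exact H (∑ x, (θ x - 1)) m hm (Nat.le_add_left _ _)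
  intro k
  induction k with
  | zero =>
    intro m hm hk
    refine ⟨m, ⟨hm, ?_⟩, le_refl m⟩
    intro m' hm' hle
    have h1 : ∑ x, m x ≤ ∑ x, m' x :=
      Finset.sum_le_sum (fun x _ => Finsupp.le_def.1 hle x)
    have h2 : ∑ x, m' x ≤ ∑ x, (θ x - 1) := sum_le_N θ hm'
    have heq : ∑ x, m x = ∑ x, m' x := by omega
    have := (Finset.sum_eq_sum_iff_of_le (fun x _ => Finsupp.le_def.1 hle x)).1 heq
    ext x
    exact this x (Finset.mem_univ x)
  | succ k ih =>
    intro m hm hk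
    by_cases hmax : m ∈ MaxMon (NfSetL θ l)
    · exact ⟨m, hmax, le_refl m⟩
    · have : ∃ m' ∈ NfSetL θ l, m ≤ m' ∧ m ≠ m' := by
        by_contra hcon
        push_neg at hcon
        exact hmax ⟨hm, fun m' hm' hle => hcon m' hm' hle⟩
      obtain ⟨m', hm', hle, hne⟩ := this
      have hstrict : ∑ x, m x < ∑ x, m' x := by
        obtain ⟨x0, hx0⟩ : ∃ x, m x ≠ m' x := by
          by_contra hcon
          push_neg at hcon
          exact hne (Finsupp.ext hcon)
        exact Finset.sum_lt_sum (fun x _ => Finsupp.le_def.1 hle x)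
          ⟨x0, Finset.mem_univ x0, lt_of_le_of_ne (Finsupp.le_def.1 hle x0) hx0⟩
      obtain ⟨m'', hm'', hle''⟩ := ih m' hm' (by omega)
      exact ⟨m'', hm'', le_trans hle hle''⟩

lemma dominate [Fintype X] (θ : X → ℕ) {s t : List (Finset X)} {W : Finset X}
    (hWne : W.Nonempty) {m' : X →₀ ℕ} (hm' : m' ∈ NfSetL θ (s ++ t)) :
    ∃ m ∈ NfSetL θ (s ++ W :: t), m' ≤ m := by
  obtain ⟨c', hc', hcm⟩ := hm'
  have h₁ := List.forall₂_take_append c' s t hc'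
  have h₂ := List.forall₂_drop_append c' s t hc'
  obtain ⟨w, hw⟩ := hWne
  set c'' := c'.take s.length ++ w :: c'.drop s.length with hc''
  have hf : List.Forall₂ (· ∈ ·) c'' (s ++ W :: t) :=
    List.rel_append h₁ (List.Forall₂.cons hw h₂)
  refine ⟨mkMon θ c'', mkMon_mem θ hf, ?_⟩
  rw [Finsupp.le_def]
  intro y
  rw [hcm y, mkMon_apply]
  have hcount : c'.count y ≤ c''.count y := by
    conv_lhs => rw [← List.take_append_drop s.length c']
    rw [hc'', List.count_append, List.count_append, List.count_cons]
    split <;> omega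
  exact min_le_min hcount (le_refl _)

lemma remove_one [Fintype X] (θ : X → ℕ) {l : List (Finset X)}
    (hne : ∀ W ∈ l, W.Nonempty) (hlen : ∑ x, (θ x - 1) < l.length) :
    ∃ W s t, l = s ++ W :: t ∧ MaxMon (NfSetL θ (s ++ t)) = MaxMon (NfSetL θ l) := by
  classical
  set TS : Finset X → Prop := fun S =>
    ∃ c, List.Forall₂ (· ∈ ·) c l ∧ ∑ y ∈ S, min (c.count y) (θ y - 1) = Dl l S with hTS
  obtain ⟨c₀, hc₀⟩ := exists_transversal hne
  have hTS0 : TS ∅ := ⟨c₀, hc₀, by simp [Dl]⟩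
  have hTSU : ∀ S T, TS S → TS T → TS (S ∪ T) := by
    rintro S T ⟨c₁, h₁, t₁⟩ ⟨c₂, h₂, t₂⟩
    exact tight_union θ h₁ h₂ t₁ t₂
  set B := ((Finset.univ : Finset (Finset X)).filter TS).sup id with hBdef
  have hB : TS B :=
    Finset.sup_induction hTS0 (fun a ha b hb => hTSU a b ha hb)
      (fun S hS => (Finset.mem_filter.1 hS).2)
  have hBmax : ∀ S, TS S → S ⊆ B := by
    intro S hS
    have : id S ≤ ((Finset.univ : Finset (Finset X)).filter TS).sup id :=
      Finset.le_sup (Finset.mem_filter.2 ⟨Finset.mem_univ _, hS⟩)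
    simpa using this
  have hWex : ∃ W ∈ l, W ∩ B = ∅ := by
    by_contra hcon
    push_neg at hcon
    have hall : ∀ W ∈ l, (decide ((W ∩ B).Nonempty)) = true := by
      intro V hVl
      simp [hcon V hVl]
    have hDlen : Dl l B = l.length := List.countP_eq_length.2 hall
    obtain ⟨c, hc, hceq⟩ := hB
    have h1 : ∑ y ∈ B, min (c.count y) (θ y - 1) ≤ ∑ y ∈ B, (θ y - 1) :=
      Finset.sum_le_sum (fun y _ => min_le_right _ _)
    have h2 : ∑ y ∈ B, (θ y - 1) ≤ ∑ x, (θ x - 1) :=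
      Finset.sum_le_sum_of_subset (Finset.subset_univ B)
    omega
  obtain ⟨W, hWl, hWB⟩ := hWex
  obtain ⟨s, t, rfl⟩ := List.append_of_mem hWl
  refine ⟨W, s, t, rfl, ?_⟩
  have hne' : ∀ V ∈ s ++ t, V.Nonempty := by
    intro V hV
    rcases List.mem_append.1 hV with h | h
    · exact hne V (List.mem_append.2 (Or.inl h))
    · exact hne V (List.mem_append.2 (Or.inr (List.mem_cons_of_mem W h)))
  have hDsplit : ∀ S : Finset X,
      Dl (s ++ W :: t) S = Dl (s ++ t) S + (if (W ∩ S).Nonempty then 1 else 0) := by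
    intro S
    simp only [Dl, List.countP_append, List.countP_cons]
    by_cases h : (W ∩ S).Nonempty <;> simp [h] <;> omega
  have hDstep : ∀ m ∈ MaxMon (NfSetL θ (s ++ W :: t)), m ∈ NfSetL θ (s ++ t) := by
    rintro m ⟨hmem, hmax⟩
    obtain ⟨c, hc, hcm⟩ := hmem
    have hd : ∀ S : Finset X, ∑ y ∈ S, m y ≤ Dl (s ++ t) S := by
      intro S
      have hb : ∑ y ∈ S, m y ≤ Dl (s ++ W :: t) S := by
        calc ∑ y ∈ S, m y = ∑ y ∈ S, min (c.count y) (θ y - 1) :=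
              Finset.sum_congr rfl (fun y _ => hcm y)
          _ ≤ _ := basic_bound θ hc S
      rw [hDsplit S] at hb
      by_cases hWS : (W ∩ S).Nonempty
      · have hne2 : ∑ y ∈ S, m y ≠ Dl (s ++ W :: t) S := by
          intro heq
          have hTSS : TS S := by
            refine ⟨c, hc, ?_⟩
            rw [← heq]
            exact Finset.sum_congr rfl (fun y _ => (hcm y).symm)
          obtain ⟨y, hy⟩ := hWS
          rw [Finset.mem_inter] at hy
          have hyB : y ∈ W ∩ B := Finset.mem_inter.2 ⟨hy.1, hBmax S hTSS hy.2⟩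
          rw [hWB] at hyB
          exact absurd hyB (Finset.notMem_empty y)
        rw [hDsplit S, if_pos hWS] at hne2
        rw [if_pos hWS] at hb
        omega
      · rw [if_neg hWS] at hb
        omega
    obtain ⟨c', hc', hcnt⟩ := hall_transversal (s ++ t) hne' (fun y => m y) hd
    have hmle : m ≤ mkMon θ c' := by
      rw [Finsupp.le_def]
      intro y
      rw [mkMon_apply]
      refine le_min (hcnt y) ?_
      rw [hcm y]
      exact min_le_right _ _
    obtain ⟨m₃, hm₃, hle₃⟩ := dominate θ (hne W hWl) (mkMon_mem θ hc')
    have heq3 : m = m₃ := hmax m₃ hm₃ (le_trans hmle hle₃)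
    have hfin : mkMon θ c' = m := le_antisymm (heq3 ▸ hle₃) hmle
    rw [← hfin]
    exact mkMon_mem θ hc'
  have hdom : ∀ m' ∈ NfSetL θ (s ++ t), ∃ m ∈ NfSetL θ (s ++ W :: t), m' ≤ m :=
    fun m' hm' => dominate θ (hne W hWl) hm'
  ext m
  constructor
  · rintro ⟨hmem', hmax'⟩
    obtain ⟨m₂, hm₂, hle₂⟩ := hdom m hmem'
    obtain ⟨m₃, hm₃, hle₃⟩ := exists_max θ hm₂
    have hm3' : m₃ ∈ NfSetL θ (s ++ t) := hDstep m₃ hm₃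
    have : m = m₃ := hmax' m₃ hm3' (le_trans hle₂ hle₃)
    rw [this]
    exact hm₃
  · intro hm
    obtain ⟨hmem, hmax⟩ := hm
    refine ⟨hDstep m ⟨hmem, hmax⟩, ?_⟩
    intro m' hm' hle
    obtain ⟨m₄, hm₄, hle₄⟩ := hdom m' hm'
    have heq4 : m = m₄ := hmax m₄ hm₄ (le_trans hle hle₄)
    exact le_antisymm hle (heq4 ▸ hle₄)

end TCAux

/-- every product of linear terms over threshold variables of
length exceeding `Σ_x (θ x − 1)` has a strict subproduct `t'` such that all
intermediate subproducts `t'' ` with `t' ⪯ t'' ⪯ t` have the same set of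
maximal monomials as `t`. -/
theorem threshold_cutoff
    {X : Type*} [Fintype X] [DecidableEq X] (θ : X → ℕ) (hθ : ∀ x, 2 ≤ θ x)
    (l : List (Finset X)) (hne : ∀ W ∈ l, W.Nonempty)
    (hlen : ∑ x : X, (θ x - 1) < l.length) :
    ∃ l' : List (Finset X), l'.Sublist l ∧ l' ≠ l ∧
      ∀ l'' : List (Finset X), l'.Sublist l'' → l''.Sublist l →
        MaxMon (NfSetL θ l'') = MaxMon (NfSetL θ l) := by
  obtain ⟨W, s, t, rfl, hMM⟩ := TCAux.remove_one θ hne hlen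
  refine ⟨s ++ t, (List.sublist_cons_self W t).append_left s, ?_, ?_⟩
  · intro h
    have := congrArg List.length h
    simp at this
  · intro l'' h1 h2
    have e1 := h1.length_le
    have e2 := h2.length_le
    simp only [List.length_append, List.length_cons] at e1 e2
    by_cases hl2 : l''.length = (s ++ W :: t).length
    · rw [h2.eq_of_length hl2]
    · have hl1 : (s ++ t).length = l''.length := by
        simp only [List.length_append, List.length_cons] at hl2 ⊢
        omega
      rw [← h1.eq_of_length hl1]
      exact hMM
end

section
/- In an idempotent commutative semiring over variables partitioned into bounded variables (satisfying s^{b(s)} = 0) and periodic variables (satisfying s^{p(s)} = 1), every product t of linear terms each containing the constant 1 as a summand, of length exceeding Σ_{bounded s}(b(s)−1) + Σ_{periodic s}(p(s)−1), has a strict subproduct t' such that nf(t'') = nf(t) for every t'' with t' ⪯ t'' ⪯ t. -/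
namespace OneLinearAux

variable {R : Type*} [CommSemiring R]

/-- The canonical order of an idempotent semiring. -/
def rle (a b : R) : Prop := a + b = b

section
variable (ha : ∀ a : R, a + a = a)
include ha
set_option linter.unusedSectionVars false

lemma rle_refl (a : R) : rle a a := ha a

lemma rle_trans {a b c : R} (h1 : rle a b) (h2 : rle b c) : rle a c := by
  unfold rle at *
  rw [← h2, ← add_assoc, h1]

lemma rle_antisymm {a b : R} (h1 : rle a b) (h2 : rle b a) : a = b := by
  unfold rle at *
  calc a = b + a := h2.symm
    _ = a + b := add_comm b a
    _ = b := h1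

lemma rle_add {a b c d : R} (h1 : rle a b) (h2 : rle c d) : rle (a + c) (b + d) := by
  unfold rle at *
  rw [add_add_add_comm, h1, h2]

lemma rle_add_left (a b : R) : rle a (a + b) := by
  unfold rle; rw [← add_assoc, ha]

lemma rle_mul_left (c : R) {a b : R} (h : rle a b) : rle (c * a) (c * b) := by
  unfold rle at *
  rw [← mul_add, h]

lemma rle_mul {a b c d : R} (h1 : rle a b) (h2 : rle c d) : rle (a * c) (b * d) := by
  refine rle_trans ha (rle_mul_left ha a h2) ?_
  rw [mul_comm a d, mul_comm b d]
  exact rle_mul_left ha d h1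

lemma one_rle_one_add (x : R) : rle 1 (1 + x) := rle_add_left ha 1 x

lemma rle_pow {a b : R} (h : rle a b) (k : ℕ) : rle (a ^ k) (b ^ k) := by
  induction k with
  | zero => simpa using rle_refl ha 1
  | succ n ih => rw [pow_succ, pow_succ]; exact rle_mul ha ih h

lemma rle_prod {ι : Type*} {s : Finset ι} {f g : ι → R}
    (h : ∀ i ∈ s, rle (f i) (g i)) : rle (∏ i ∈ s, f i) (∏ i ∈ s, g i) := by
  classical
  induction s using Finset.induction with
  | empty => simpa using rle_refl ha 1
  | @insert a s hx ih =>
      rw [Finset.prod_insert hx, Finset.prod_insert hx]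
      exact rle_mul ha (h a (Finset.mem_insert_self a s))
        (ih fun i hi => h i (Finset.mem_insert_of_mem hi))

lemma one_rle_prod {ι : Type*} {s : Finset ι} {f : ι → R}
    (h : ∀ i ∈ s, rle 1 (f i)) : rle 1 (∏ i ∈ s, f i) := by
  have := rle_prod ha (g := f) (f := fun _ => (1 : R)) (s := s) h
  simpa using this

lemma sum_absorb {ι : Type*} [DecidableEq ι] {S T : Finset ι} (f : ι → R) (h : S ⊆ T) :
    rle (∑ i ∈ S, f i) (∑ i ∈ T, f i) := by
  unfold rle
  have hT : ∑ i ∈ T, f i = (∑ i ∈ S, f i) + ∑ i ∈ T \ S, f i := by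
    rw [add_comm, Finset.sum_sdiff h]
  rw [hT, ← add_assoc, ha (∑ i ∈ S, f i)]

lemma mem_rle_sum {ι : Type*} [DecidableEq ι] {s : Finset ι} {a : ι} (h : a ∈ s) (f : ι → R) :
    rle (f a) (∑ i ∈ s, f i) := by
  have := sum_absorb ha f (Finset.singleton_subset_iff.mpr h)
  simpa using this

lemma one_add_pow (x : R) (k : ℕ) : (1 + x) ^ k = ∑ i ∈ Finset.range (k + 1), x ^ i := by
  induction k with
  | zero => simp
  | succ k ih =>
      rw [pow_succ, ih, mul_add, mul_one]
      have hmul : (∑ i ∈ Finset.range (k+1), x ^ i) * x = ∑ i ∈ Finset.range (k+1), x ^ (i+1) := by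
        rw [Finset.sum_mul]
        exact Finset.sum_congr rfl fun i _ => by rw [pow_succ]
      have hshift : ∀ m : ℕ, ∑ i ∈ Finset.range (m + 1), x ^ i =
          (∑ i ∈ Finset.range m, x ^ (i + 1)) + 1 := by
        intro m
        rw [Finset.sum_range_succ']
        simp
      have habs : (∑ i ∈ Finset.range k, x ^ (i+1)) + ∑ i ∈ Finset.range (k+1), x ^ (i+1)
          = ∑ i ∈ Finset.range (k+1), x ^ (i+1) :=
        sum_absorb ha _ (Finset.range_subset_range.mpr (Nat.le_succ k))
      rw [hmul, hshift (k+1), hshift k]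
      calc (∑ i ∈ Finset.range k, x ^ (i + 1)) + 1 + ∑ i ∈ Finset.range (k + 1), x ^ (i + 1)
          = ((∑ i ∈ Finset.range k, x ^ (i + 1)) + ∑ i ∈ Finset.range (k + 1), x ^ (i + 1)) + 1 := by
            ring
        _ = (∑ i ∈ Finset.range (k + 1), x ^ (i + 1)) + 1 := by rw [habs]

lemma one_add_pow_absorb (x : R) (k : ℕ) (hx : x ^ (k + 1) = 0 ∨ x ^ (k + 1) = 1) :
    (1 + x) * (1 + x) ^ k = (1 + x) ^ k := by
  rw [← pow_succ', one_add_pow ha, one_add_pow ha, Finset.sum_range_succ]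
  rcases hx with hx | hx
  · rw [hx, add_zero]
  · rw [hx]
    have h0 : (0 : ℕ) ∈ Finset.range (k + 1) := by simp
    have habs := mem_rle_sum ha h0 (fun i => x ^ i)
    unfold rle at habs
    simp only [pow_zero] at habs
    rw [add_comm, habs]

lemma pow_stab (x : R) (k : ℕ) (hstep : (1 + x) * (1 + x) ^ k = (1 + x) ^ k)
    {m : ℕ} (h : k ≤ m) : (1 + x) ^ m = (1 + x) ^ k := by
  induction m, h using Nat.le_induction with
  | base => rfl
  | succ m hm ih => rw [pow_succ, ih, mul_comm, hstep]

end
end OneLinearAux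

open OneLinearAux in
/-- The key algebraic absorption: given the saturated matching structure
`(U, J, ψ)`, the factor at `i` is absorbed by the product over `T ⊇ J`. -/
theorem absorb_main {σ : Type*} [DecidableEq σ] {R : Type*} [CommSemiring R]
    (ha : ∀ a : R, a + a = a) (v : σ → R) (c : σ → ℕ)
    (hkey : ∀ u, (1 + v u) * (1 + v u) ^ (c u) = (1 + v u) ^ (c u))
    (hone : ∀ u, c u = 0 → v u = 1)
    {ι : Type*} [DecidableEq ι] (W : ι → Finset σ) (U : Finset σ) (J : Finset ι) (ψ : ι → σ)
    (hψW : ∀ j ∈ J, ψ j ∈ W j) (hWU : ∀ j ∈ J, W j ⊆ U)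
    (hcnt : ∀ u ∈ U, c u ≤ (J.filter fun j => ψ j = u).card)
    (i : ι) (hiU : W i ⊆ U) (T : Finset ι) (hJT : J ⊆ T) :
    (1 + ∑ x ∈ W i, v x) * ∏ j ∈ T, (1 + ∑ x ∈ W j, v x)
      = ∏ j ∈ T, (1 + ∑ x ∈ W j, v x) := by
  classical
  set g : σ → R := fun u => (1 + v u) ^ (c u) with hg
  set G : R := ∏ u ∈ U, g u with hGdef
  have hg1 : ∀ u, rle (1 : R) (g u) := by
    intro u
    have := rle_pow ha (one_rle_one_add ha (v u)) (c u)
    simpa using this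
  have hgg : ∀ u, g u * g u = g u := by
    intro u
    show (1 + v u) ^ (c u) * (1 + v u) ^ (c u) = (1 + v u) ^ (c u)
    rw [← pow_add]
    exact pow_stab ha (v u) (c u) (hkey u) (Nat.le_add_right _ _)
  have hGG : G * G = G := by
    rw [hGdef, ← Finset.prod_mul_distrib]
    exact Finset.prod_congr rfl fun u _ => hgg u
  have h1G : rle (1 : R) G := one_rle_prod ha fun u _ => hg1 u
  have h1xg : ∀ u, rle (1 + v u) (g u) := by
    intro u
    rcases Nat.eq_zero_or_pos (c u) with h0 | hpos
    · have hv := hone u h0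
      show rle (1 + v u) ((1 + v u) ^ (c u))
      rw [h0, pow_zero, hv]
      show (1 : R) + 1 + 1 = 1
      rw [ha 1, ha 1]
    · obtain ⟨k, hk⟩ : ∃ k, c u = k + 1 := ⟨c u - 1, by omega⟩
      show rle (1 + v u) ((1 + v u) ^ (c u))
      rw [hk, pow_succ, mul_comm]
      have h2 : rle ((1 + v u) * 1) ((1 + v u) * (1 + v u) ^ k) :=
        rle_mul_left ha _ (by simpa using rle_pow ha (one_rle_one_add ha (v u)) k)
      simpa using h2
  have hmem_t : ∀ (Wt : Finset σ) (u : σ), u ∈ Wt → rle (1 + v u) (1 + ∑ x ∈ Wt, v x) :=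
    fun Wt u hu => rle_add ha (rle_refl ha 1) (mem_rle_sum ha hu v)
  have hfprod : ∀ Wt : Finset σ, rle (1 + ∑ x ∈ Wt, v x) (∏ u ∈ Wt, (1 + v u)) := by
    intro Wt
    induction Wt using Finset.induction with
    | empty => simpa using rle_refl ha 1
    | @insert a s hx ih =>
        rw [Finset.sum_insert hx, Finset.prod_insert hx, add_mul, one_mul]
        have heq : (1 + (v a + ∑ x ∈ s, v x)) + v a * ∑ x ∈ s, v x
            = (1 + ∑ x ∈ s, v x) + v a * (1 + ∑ x ∈ s, v x) := by ring
        refine rle_trans ha (rle_add_left ha _ (v a * ∑ x ∈ s, v x)) ?_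
        rw [heq]
        exact rle_add ha ih (rle_mul_left ha (v a) ih)
  have hfG : ∀ Wt : Finset σ, Wt ⊆ U → rle (1 + ∑ x ∈ Wt, v x) G := by
    intro Wt hsub
    refine rle_trans ha (hfprod Wt) ?_
    refine rle_trans ha (rle_prod ha (f := fun u => 1 + v u) (g := g) fun u _ => h1xg u) ?_
    rw [hGdef, ← Finset.prod_sdiff hsub]
    have h2 := rle_mul ha (one_rle_prod ha (s := U \ Wt) fun u _ => hg1 u)
      (rle_refl ha (∏ u ∈ Wt, g u))
    simpa using h2
  have hGpow : ∀ m : ℕ, G ^ (m + 1) = G := by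
    intro m
    induction m with
    | zero => rw [pow_one]
    | succ m ih => rw [pow_succ, ih, hGG]
  have hQG : ∏ j ∈ J, (1 + ∑ x ∈ W j, v x) = G := by
    apply rle_antisymm ha
    · rcases J.eq_empty_or_nonempty with hJe | hJne
      · rw [hJe]; simpa using h1G
      · have h1 : rle (∏ j ∈ J, (1 + ∑ x ∈ W j, v x)) (∏ _j ∈ J, G) :=
          rle_prod ha fun j hj => hfG (W j) (hWU j hj)
        rw [Finset.prod_const] at h1
        obtain ⟨m, hm⟩ : ∃ m, J.card = m + 1 :=
          ⟨J.card - 1, (Nat.succ_pred_eq_of_pos (Finset.card_pos.mpr hJne)).symm⟩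
        rwa [hm, hGpow m] at h1
    · have hstep1 : G = ∏ u ∈ U, (1 + v u) ^ (J.filter fun j => ψ j = u).card := by
        rw [hGdef]
        exact Finset.prod_congr rfl fun u hu =>
          (pow_stab ha (v u) (c u) (hkey u) (hcnt u hu)).symm
      have hinner : ∀ u ∈ U, ∏ j ∈ J.filter (fun j => ψ j = u), (1 + v (ψ j))
          = (1 + v u) ^ (J.filter fun j => ψ j = u).card := by
        intro u _
        rw [Finset.prod_congr rfl (fun j hj => by rw [(Finset.mem_filter.mp hj).2]),
          Finset.prod_const]
      have hstep2 : ∏ u ∈ U, (1 + v u) ^ (J.filter fun j => ψ j = u).card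
          = ∏ j ∈ J, (1 + v (ψ j)) := by
        rw [← Finset.prod_fiberwise_of_maps_to (fun j hj => hWU j hj (hψW j hj))
          (fun j => 1 + v (ψ j))]
        exact Finset.prod_congr rfl fun u hu => (hinner u hu).symm
      rw [hstep1, hstep2]
      exact rle_prod ha fun j hj => hmem_t (W j) (ψ j) (hψW j hj)
  have hFiG : (1 + ∑ x ∈ W i, v x) * G = G := by
    apply rle_antisymm ha
    · have h2 : rle ((1 + ∑ x ∈ W i, v x) * G) (G * G) :=
        rle_mul ha (hfG (W i) hiU) (rle_refl ha G)
      rwa [hGG] at h2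
    · have h2 : rle (1 * G) ((1 + ∑ x ∈ W i, v x) * G) :=
        rle_mul ha (rle_add_left ha 1 _) (rle_refl ha G)
      simpa using h2
  calc (1 + ∑ x ∈ W i, v x) * ∏ j ∈ T, (1 + ∑ x ∈ W j, v x)
      = (1 + ∑ x ∈ W i, v x) *
        ((∏ j ∈ T \ J, (1 + ∑ x ∈ W j, v x)) * ∏ j ∈ J, (1 + ∑ x ∈ W j, v x)) := by
        rw [Finset.prod_sdiff hJT]
    _ = (∏ j ∈ T \ J, (1 + ∑ x ∈ W j, v x)) *
        ((1 + ∑ x ∈ W i, v x) * ∏ j ∈ J, (1 + ∑ x ∈ W j, v x)) := by ring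
    _ = (∏ j ∈ T \ J, (1 + ∑ x ∈ W j, v x)) * ∏ j ∈ J, (1 + ∑ x ∈ W j, v x) := by
        rw [hQG, hFiG]
    _ = ∏ j ∈ T, (1 + ∑ x ∈ W j, v x) := Finset.prod_sdiff hJT

/-- The combinatorial lemma: whenever a list of nonempty sets of variables is
longer than the total capacity, there is a position `i` and a saturated
matching structure `(U, J, ψ)` avoiding `i`. -/
theorem comb_main {σ : Type*} [DecidableEq σ] {n : ℕ} (W : Fin n → Finset σ) (c : σ → ℕ)
    (hW : ∀ j, (W j).Nonempty) :
    ∀ V : Finset σ, ∀ A : Finset (Fin n), (∀ j ∈ A, W j ⊆ V) → (∑ u ∈ V, c u) < A.card →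
    ∃ (i : Fin n) (U : Finset σ) (J : Finset (Fin n)) (ψ : Fin n → σ),
      i ∈ A ∧ J ⊆ A ∧ i ∉ J ∧ (∀ j ∈ J, ψ j ∈ W j) ∧ (∀ j ∈ J, W j ⊆ U) ∧ W i ⊆ U ∧
      (∀ u ∈ U, c u ≤ (J.filter fun j => ψ j = u).card) := by
  classical
  intro V
  induction V using Finset.strongInduction with
  | _ V ih =>
    intro A hWA hcard
    by_cases hS : ∃ S ⊆ V, S.Nonempty ∧
        (A.filter fun j => (W j ∩ S).Nonempty).card ≤ ∑ u ∈ S, c u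
    · obtain ⟨S, hSV, hSne, hSc⟩ := hS
      have hssub : V \ S ⊂ V := Finset.sdiff_ssubset hSV hSne
      have hWA' : ∀ j ∈ A.filter (fun j => ¬ (W j ∩ S).Nonempty), W j ⊆ V \ S := by
        intro j hj x hx
        have hjA : j ∈ A := Finset.mem_of_mem_filter j hj
        have hne : ¬ (W j ∩ S).Nonempty := (Finset.mem_filter.mp hj).2
        exact Finset.mem_sdiff.mpr ⟨hWA j hjA hx,
          fun hxS => hne ⟨x, Finset.mem_inter.mpr ⟨hx, hxS⟩⟩⟩
      have hcard' : (∑ u ∈ V \ S, c u) < (A.filter (fun j => ¬ (W j ∩ S).Nonempty)).card := by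
        have hsplit : (A.filter fun j => (W j ∩ S).Nonempty).card
            + (A.filter (fun j => ¬ (W j ∩ S).Nonempty)).card = A.card :=
          Finset.card_filter_add_card_filter_not _
        have hsum : (∑ u ∈ V \ S, c u) + ∑ u ∈ S, c u = ∑ u ∈ V, c u :=
          Finset.sum_sdiff hSV
        omega
      obtain ⟨i, U, J, ψ, hiA, hJA, hiJ, h1, h2, h3, h4⟩ := ih (V \ S) hssub _ hWA' hcard'
      exact ⟨i, U, J, ψ, Finset.mem_of_mem_filter i hiA, hJA.trans (Finset.filter_subset _ _),
        hiJ, h1, h2, h3, h4⟩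
    · push_neg at hS
      have hAne : A.Nonempty := Finset.card_pos.mp (Nat.lt_of_le_of_lt (Nat.zero_le _) hcard)
      obtain ⟨i, hiA⟩ := hAne
      -- Hall's theorem with demands
      set D : Finset ((_ : σ) × ℕ) := V.sigma (fun u => Finset.range (c u)) with hD
      set t : {x // x ∈ D} → Finset (Fin n) :=
        fun x => (A.erase i).filter (fun j => x.1.1 ∈ W j) with ht
      have hmemD : ∀ x : {x // x ∈ D}, x.1.1 ∈ V ∧ x.1.2 ∈ Finset.range (c x.1.1) :=
        fun x => Finset.mem_sigma.mp x.2
      have hhall : ∀ s : Finset {x // x ∈ D}, s.card ≤ (s.biUnion t).card := by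
        intro s
        rcases s.eq_empty_or_nonempty with hse | hsne
        · simp [hse]
        · set S : Finset σ := s.image (fun x => x.1.1) with hSdef
          have hSV : S ⊆ V := by
            intro u hu
            obtain ⟨x, _, hx⟩ := Finset.mem_image.mp hu
            exact hx ▸ (hmemD x).1
          have hSne : S.Nonempty := hsne.image _
          have h1 : s.card ≤ ∑ u ∈ S, c u := by
            have hinj : (s.image Subtype.val).card = s.card :=
              Finset.card_image_of_injective s Subtype.val_injective
            have hsub : s.image Subtype.val ⊆ S.sigma (fun u => Finset.range (c u)) := by
              intro x hx
              obtain ⟨y, hy, hyx⟩ := Finset.mem_image.mp hx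
              subst hyx
              exact Finset.mem_sigma.mpr ⟨Finset.mem_image.mpr ⟨y, hy, rfl⟩, (hmemD y).2⟩
            have hle := Finset.card_le_card hsub
            rwa [hinj, Finset.card_sigma, Finset.sum_congr rfl
              (fun u _ => Finset.card_range (c u))] at hle
          have h2 : (A.filter fun j => (W j ∩ S).Nonempty) ⊆ insert i (s.biUnion t) := by
            intro j hj
            obtain ⟨hjA, u, hu⟩ := Finset.mem_filter.mp hj
            rw [Finset.mem_inter] at hu
            obtain ⟨x, hxs, hxu⟩ := Finset.mem_image.mp hu.2
            by_cases hji : j = i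
            · exact Finset.mem_insert.mpr (Or.inl hji)
            · refine Finset.mem_insert.mpr (Or.inr (Finset.mem_biUnion.mpr ⟨x, hxs, ?_⟩))
              exact Finset.mem_filter.mpr ⟨Finset.mem_erase.mpr ⟨hji, hjA⟩, hxu ▸ hu.1⟩
          have h3 := hS S hSV hSne
          have h4 := Finset.card_le_card h2
          have h5 := Finset.card_insert_le i (s.biUnion t)
          omega
      obtain ⟨f, hfinj, hft⟩ := (Finset.all_card_le_biUnion_card_iff_exists_injective t).mp hhall
      set J : Finset (Fin n) := Finset.univ.image f with hJ
      have hψex : ∀ j, (∃ x : {x // x ∈ D}, f x = j) ∨ ¬ (∃ x : {x // x ∈ D}, f x = j) :=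
        fun j => em _
      set ψ : Fin n → σ := fun j => if h : ∃ x : {x // x ∈ D}, f x = j then h.choose.1.1
        else (hW j).choose with hψ
      have hψval : ∀ (j : Fin n) (h : ∃ x : {x // x ∈ D}, f x = j), ψ j = h.choose.1.1 := by
        intro j h
        simp only [hψ, dif_pos h]
      have hψmem : ∀ j, (∃ x : {x // x ∈ D}, f x = j) → ψ j ∈ W j := by
        intro j hj
        rw [hψval j hj]
        have hspec := hj.choose_spec
        have hx := hft hj.choose
        have h5 := (Finset.mem_filter.mp hx).2
        rw [hspec] at h5
        exact h5
      have hJAe : ∀ j ∈ J, j ∈ A.erase i := by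
        intro j hj
        obtain ⟨x, _, hx⟩ := Finset.mem_image.mp hj
        have hmem := hft x
        rw [ht] at hmem
        exact hx ▸ Finset.mem_of_mem_filter _ hmem
      refine ⟨i, V, J, ψ, hiA, fun j hj => Finset.mem_of_mem_erase (hJAe j hj),
        fun hiJ => (Finset.mem_erase.mp (hJAe i hiJ)).1 rfl, ?_, ?_, hWA i hiA, ?_⟩
      · intro j hj
        obtain ⟨x, _, hx⟩ := Finset.mem_image.mp hj
        exact hψmem j ⟨x, hx⟩
      · intro j hj
        exact hWA j (Finset.mem_of_mem_erase (hJAe j hj))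
      · intro u hu
        set emb : {k // k ∈ Finset.range (c u)} → Fin n :=
          fun k => f ⟨⟨u, k.1⟩, Finset.mem_sigma.mpr ⟨hu, k.2⟩⟩ with hemb
        have hembinj : Function.Injective emb := by
          intro k1 k2 hk
          have h2 := hfinj hk
          have h3 : (⟨u, k1.1⟩ : (_ : σ) × ℕ) = ⟨u, k2.1⟩ := congrArg Subtype.val h2
          exact Subtype.ext (congrArg Sigma.snd h3)
        have hembsub : (Finset.range (c u)).attach.image emb ⊆ J.filter fun j => ψ j = u := by
          intro j hj
          obtain ⟨k, _, hk⟩ := Finset.mem_image.mp hj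
          refine Finset.mem_filter.mpr ⟨Finset.mem_image.mpr ⟨_, Finset.mem_univ _, hk⟩, ?_⟩
          have hex : ∃ x : {x // x ∈ D}, f x = j := ⟨_, hk⟩
          rw [hψval j hex]
          have h2 := hfinj (hex.choose_spec.trans hk.symm)
          rw [h2]
        have hle := Finset.card_le_card hembsub
        rwa [Finset.card_image_of_injective _ hembinj, Finset.card_attach,
          Finset.card_range] at hle

open OneLinearAux in
/-- over bounded variables `B` (axiom `s^{b s} = 0`) and periodic
variables `P` (axiom `s^{p s} = 1`), every product of 1-linear terms
`1 + Σ_{s∈W} s` of length exceeding `Σ_B (b s − 1) + Σ_P (p s − 1)` has a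
strict subproduct `t'` with `nf(t'') = nf(t)` (i.e. equality in every model)
for all intermediate subproducts `t' ⪯ t'' ⪯ t`. -/
theorem one_linear_cutoff
    {B P : Type*} [Fintype B] [Fintype P]
    (b : B → ℕ) (p : P → ℕ) (hb : ∀ s, 2 ≤ b s) (hp : ∀ s, 1 ≤ p s)
    (l : List (Finset (B ⊕ P))) (hne : ∀ W ∈ l, W.Nonempty)
    (hlen : (∑ s : B, (b s - 1)) + ∑ s : P, (p s - 1) < l.length) :
    ∃ l' : List (Finset (B ⊕ P)), l'.Sublist l ∧ l' ≠ l ∧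
      ∀ (R : Type) [CommSemiring R], (∀ a : R, a + a = a) →
        ∀ v : B ⊕ P → R, (∀ s : B, v (Sum.inl s) ^ b s = 0) →
          (∀ s : P, v (Sum.inr s) ^ p s = 1) →
          ∀ l'' : List (Finset (B ⊕ P)), l'.Sublist l'' → l''.Sublist l →
            (l''.map fun W => (1 : R) + ∑ x ∈ W, v x).prod =
              (l.map fun W => (1 : R) + ∑ x ∈ W, v x).prod := by
  classical
  set c : B ⊕ P → ℕ := Sum.elim (fun s => b s - 1) (fun s => p s - 1) with hc
  have hcsum : (∑ u : B ⊕ P, c u) < l.length := by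
    rw [hc, Fintype.sum_sum_type]
    exact hlen
  have hWne : ∀ j : Fin l.length, (l.get j).Nonempty := by
    intro j
    exact hne (l.get j) (List.get_mem l j)
  obtain ⟨i, U, J, ψ, _, _, hiJ, hψW, hWU, hiU, hcnt⟩ :=
    comb_main (fun j : Fin l.length => l.get j) c hWne Finset.univ Finset.univ
      (fun j _ => Finset.subset_univ _)
      (by simpa using hcsum)
  refine ⟨l.eraseIdx i, List.eraseIdx_sublist l i, ?_, ?_⟩
  · intro heq
    have h3 : (l.eraseIdx (i : ℕ)).length = l.length - 1 := by
      rw [List.length_eraseIdx]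
      simp [i.isLt]
    have h4 := congrArg List.length heq
    have h5 := i.isLt
    omega
  · intro R _ ha v hb0 hp1 l'' h1 h2
    have hlen' : (l.eraseIdx i).length = l.length - 1 := by
      rw [List.length_eraseIdx]
      simp [i.isLt]
    have hn1 : 1 ≤ l.length := by
      have := i.isLt; omega
    have hl2 : l''.length ≤ l.length := h2.length_le
    have hl1 : l.length - 1 ≤ l''.length := hlen' ▸ h1.length_le
    set f : Finset (B ⊕ P) → R := fun Wt => (1 : R) + ∑ x ∈ Wt, v x with hf
    have hkey : ∀ u : B ⊕ P, (1 + v u) * (1 + v u) ^ (c u) = (1 + v u) ^ (c u) := by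
      intro u
      apply one_add_pow_absorb ha
      rcases u with s | s
      · left
        have hcb : c (Sum.inl s) + 1 = b s := by
          simp only [hc, Sum.elim_inl]
          have := hb s; omega
        rw [hcb]
        exact hb0 s
      · right
        have hcp : c (Sum.inr s) + 1 = p s := by
          simp only [hc, Sum.elim_inr]
          have := hp s; omega
        rw [hcp]
        exact hp1 s
    have hone : ∀ u : B ⊕ P, c u = 0 → v u = 1 := by
      intro u h0
      rcases u with s | s
      · exfalso
        simp only [hc, Sum.elim_inl] at h0
        have := hb s; omega
      · simp only [hc, Sum.elim_inr] at h0
        have hps : p s = 1 := by have := hp s; omega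
        have hv := hp1 s
        rwa [hps, pow_one] at hv
    have habs : f (l.get i) * ∏ j ∈ Finset.univ.erase i, f (l.get j)
        = ∏ j ∈ Finset.univ.erase i, f (l.get j) := by
      have hJsub : J ⊆ Finset.univ.erase i := fun j hj =>
        Finset.mem_erase.mpr ⟨fun h => hiJ (h ▸ hj), Finset.mem_univ j⟩
      exact absorb_main ha v c hkey hone (fun j : Fin l.length => l.get j) U J ψ hψW hWU hcnt
        i hiU (Finset.univ.erase i) hJsub
    have hprod_l : (l.map f).prod = ∏ j : Fin l.length, f (l.get j) := by
      rw [Fin.prod_univ_def]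
      congr 1
      conv_lhs => rw [← List.map_get_finRange l]
      rw [List.map_map]
      rfl
    -- identify the multiset of the erased list
    have hmapuniv : Multiset.map (fun j : Fin l.length => l.get j)
        (Finset.univ : Finset (Fin l.length)).val = (↑l : Multiset (Finset (B ⊕ P))) := by
      show Multiset.map (fun j : Fin l.length => l.get j) ↑(List.finRange l.length) = _
      show ((List.finRange l.length).map l.get : Multiset (Finset (B ⊕ P))) = _
      rw [List.map_get_finRange]
    have hperm : l.Perm (l.get i :: l.eraseIdx i) := by
      have hsplit : l = l.take i ++ l.get i :: l.drop (i + 1) := by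
        conv_lhs => rw [← List.take_append_drop i l]
        congr 1
        rw [List.drop_eq_getElem_cons i.isLt]
        rfl
      rw [List.eraseIdx_eq_take_drop_succ]
      conv_lhs => rw [hsplit]
      exact List.perm_middle
    have hmult : (↑(l.eraseIdx i) : Multiset (Finset (B ⊕ P))) =
        Multiset.map (fun j : Fin l.length => l.get j) (Finset.univ.erase i).val := by
      have h1' : l.get i ::ₘ (↑(l.eraseIdx i) : Multiset (Finset (B ⊕ P)))
          = (↑l : Multiset (Finset (B ⊕ P))) := by
        rw [Multiset.cons_coe]
        exact Multiset.coe_eq_coe.mpr hperm.symm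
      have h2' : l.get i ::ₘ Multiset.map (fun j : Fin l.length => l.get j)
          (Finset.univ.erase i).val = (↑l : Multiset (Finset (B ⊕ P))) := by
        rw [← Multiset.map_cons, Finset.erase_val,
          Multiset.cons_erase (Finset.mem_univ i : i ∈ (Finset.univ : Finset (Fin l.length)).val)]
        exact hmapuniv
      exact (Multiset.cons_inj_right _).mp (h1'.trans h2'.symm)
    have hprod_l' : ((l.eraseIdx i).map f).prod = ∏ j ∈ Finset.univ.erase i, f (l.get j) := by
      have hcalc : ((l.eraseIdx i).map f).prod
          = (Multiset.map f (↑(l.eraseIdx i) : Multiset (Finset (B ⊕ P)))).prod := rfl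
      rw [hcalc, hmult, Multiset.map_map]
      rfl
    have hmain : ((l.eraseIdx i).map f).prod = (l.map f).prod := by
      rw [hprod_l, hprod_l',
        ← Finset.mul_prod_erase Finset.univ (fun j => f (l.get j)) (Finset.mem_univ i)]
      exact habs.symm
    rcases Nat.eq_or_lt_of_le hl2 with hEq | hLt
    · have heq2 : l'' = l := h2.eq_of_length hEq
      rw [heq2]
    · have heq2 : l.eraseIdx i = l'' := h1.eq_of_length (by rw [hlen']; omega)
      rw [← heq2]
      exact hmain
end

section
/- Let s₀ be a periodic variable whose period p₀ divides the period of every periodic variable, B the bounded variables, P the periodic variables. For any product t = (s₀+ℓ₁)⋯(s₀+ℓ_k) where each ℓ_i is a nonempty sum over (B ∪ P) \ {s₀}, the normal form of t equals Σ_{m₁ ∈ nf(t₁)} s₀^{(k − deg m₁) mod p₀} · m₁, where t₁ = (1+ℓ₁)⋯(1+ℓ_k). -/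
section Aux
set_option linter.unusedSectionVars false
variable {B P : Type*} [DecidableEq B] [DecidableEq P]

/-- count finsupp of a choice -/
noncomputable def cntF {k : ℕ} (c : Fin k → Option (B ⊕ P)) : (B ⊕ P) →₀ ℕ :=
  ∑ i, (c i).elim 0 (fun x => Finsupp.single x 1)

lemma cntF_apply {k : ℕ} (c : Fin k → Option (B ⊕ P)) (x : B ⊕ P) :
    cntF c x = (Finset.univ.filter fun i => c i = some x).card := by
  rw [cntF, Finset.sum_apply', Finset.card_filter]
  refine Finset.sum_congr rfl fun i _ => ?_
  cases h : c i with
  | none => simp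
  | some y =>
    simp only [Option.elim, Finsupp.single_apply]
    by_cases hy : y = x
    · subst hy; simp
    · simp [hy, Option.some_inj, fun h' : some y = some x => hy (Option.some_inj.mp h')]

/-- reduced monomial: periodic coordinates taken mod the period -/
noncomputable def redF (p : P → ℕ) (n : (B ⊕ P) →₀ ℕ) : (B ⊕ P) →₀ ℕ :=
  Finsupp.onFinset n.support
    (fun x => match x with
      | Sum.inl _ => n x
      | Sum.inr s => n x % p s)
    (by
      intro a ha
      rw [Finsupp.mem_support_iff]
      match a with
      | Sum.inl s => exact ha
      | Sum.inr s => exact fun h0 => ha (by show n (Sum.inr s) % p s = 0; rw [h0, Nat.zero_mod]))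

@[simp] lemma redF_inl (p : P → ℕ) (n : (B ⊕ P) →₀ ℕ) (s : B) :
    redF p n (Sum.inl s) = n (Sum.inl s) := rfl

@[simp] lemma redF_inr (p : P → ℕ) (n : (B ⊕ P) →₀ ℕ) (s : P) :
    redF p n (Sum.inr s) = n (Sum.inr s) % p s := rfl

lemma redF_le (p : P → ℕ) (n : (B ⊕ P) →₀ ℕ) (x : B ⊕ P) : redF p n x ≤ n x := by
  match x with
  | Sum.inl s => exact le_rfl
  | Sum.inr s => exact Nat.mod_le _ _

lemma redF_support_subset (p : P → ℕ) (n : (B ⊕ P) →₀ ℕ) :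
    (redF p n).support ⊆ n.support := Finsupp.support_onFinset_subset

/-- idempotent sum of a constant -/
lemma sum_const_idem {R : Type*} [AddCommMonoid R] (hadd : ∀ a : R, a + a = a)
    {α : Type*} {s : Finset α} (hs : s.Nonempty) (c : R) : (∑ _x ∈ s, c) = c := by
  classical
  induction s using Finset.induction_on with
  | empty => exact absurd hs (by simp)
  | @insert a t hx ih =>
    rw [Finset.sum_insert hx]
    rcases t.eq_empty_or_nonempty with h | h
    · simp [h]
    · rw [ih h, hadd]

/-- idempotent collapse of a sum along a map -/
lemma sum_image_idem {R : Type*} [AddCommMonoid R] (hadd : ∀ a : R, a + a = a)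
    {α β : Type*} [DecidableEq β] (s : Finset α) (φ : α → β) (g : β → R) :
    (∑ x ∈ s, g (φ x)) = ∑ y ∈ s.image φ, g y := by
  classical
  rw [← Finset.sum_fiberwise_of_maps_to (fun x hx => Finset.mem_image_of_mem φ hx) (fun x => g (φ x))]
  refine Finset.sum_congr rfl fun y hy => ?_
  obtain ⟨x, hx, rfl⟩ := Finset.mem_image.mp hy
  have hne : (s.filter fun z => φ z = φ x).Nonempty := ⟨x, Finset.mem_filter.mpr ⟨hx, rfl⟩⟩
  calc (∑ z ∈ s.filter fun z => φ z = φ x, g (φ z))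
      = ∑ z ∈ s.filter fun z => φ z = φ x, g (φ x) := by
        refine Finset.sum_congr rfl fun z hz => by rw [(Finset.mem_filter.mp hz).2]
    _ = g (φ x) := sum_const_idem hadd hne _

lemma pow_eq_pow_mod_of_pow_eq_one {R : Type*} [Monoid R] {x : R} {q : ℕ}
    (hq : x ^ q = 1) (a : ℕ) : x ^ a = x ^ (a % q) := by
  conv_lhs => rw [← Nat.div_add_mod a q]
  rw [pow_add, pow_mul, hq, one_pow, one_mul]

end Aux


/-- Normal form of the 1-linear product `t₁ = (1+ℓ₁)⋯(1+ℓ_k)` over bounded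
variables `B` (axiom `s^{b s} = 0`) and periodic variables `P` (axiom
`s^{p s} = 1`): each factor chooses either `1` or one of its variables; bounded
variables must stay strictly below their bound, periodic multiplicities are
taken modulo the period. -/
def Nf1 {B P : Type*} [DecidableEq B] [DecidableEq P]
    (b : B → ℕ) (p : P → ℕ) {k : ℕ} (ℓ : Fin k → Finset (B ⊕ P)) :
    Set ((B ⊕ P) →₀ ℕ) :=
  {m | ∃ c : Fin k → Option (B ⊕ P),
    (∀ i, ∀ x, c i = some x → x ∈ ℓ i) ∧
    (∀ s : B, (Finset.univ.filter fun i => c i = some (Sum.inl s)).card < b s ∧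
      m (Sum.inl s) = (Finset.univ.filter fun i => c i = some (Sum.inl s)).card) ∧
    (∀ s : P,
      m (Sum.inr s) = (Finset.univ.filter fun i => c i = some (Sum.inr s)).card % p s)}

/-- if the period `p s₀` of `s₀` divides every period, then for
`t = (s₀+ℓ₁)⋯(s₀+ℓ_k)` with `s₀ ∉ ℓᵢ`, the normal form of `t` equals
`Σ_{m₁ ∈ nf(t₁)} s₀^{(k − deg m₁) mod p s₀} · m₁` where `t₁ = (1+ℓ₁)⋯(1+ℓ_k)`
(the equality holding in every idempotent commutative semiring model). -/
theorem s0_anchored_normal_form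
    {B P : Type*} [DecidableEq B] [DecidableEq P]
    (b : B → ℕ) (p : P → ℕ) (hb : ∀ s, 2 ≤ b s) (hp : ∀ s, 2 ≤ p s)
    (s₀ : P) (hdvd : ∀ s, p s₀ ∣ p s)
    {k : ℕ} (ℓ : Fin k → Finset (B ⊕ P))
    (hne : ∀ i, (ℓ i).Nonempty) (hs₀ : ∀ i, Sum.inr s₀ ∉ ℓ i)
    {R : Type*} [CommSemiring R] (hadd : ∀ a : R, a + a = a)
    (v : B ⊕ P → R) (hvb : ∀ s : B, v (Sum.inl s) ^ b s = 0)
    (hvp : ∀ s : P, v (Sum.inr s) ^ p s = 1) :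
    ∃ F : Finset ((B ⊕ P) →₀ ℕ), (↑F : Set ((B ⊕ P) →₀ ℕ)) = Nf1 b p ℓ ∧
      (∏ i, (v (Sum.inr s₀) + ∑ x ∈ ℓ i, v x)) =
        ∑ m ∈ F, v (Sum.inr s₀) ^ ((k - m.sum fun _ e => e) % p s₀) *
          (m.prod fun x e => v x ^ e) := by
  classical
  set t : Fin k → Finset (Option (B ⊕ P)) := fun i => insert none ((ℓ i).image some) with ht
  set f : Option (B ⊕ P) → R := fun o => o.elim (v (Sum.inr s₀)) v with hf
  set Good : (Fin k → Option (B ⊕ P)) → Prop :=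
    fun c => ∀ s : B, cntF c (Sum.inl s) < b s with hGoodDef
  set G : ((B ⊕ P) →₀ ℕ) → R := fun m =>
    v (Sum.inr s₀) ^ ((k - m.sum fun _ e => e) % p s₀) * (m.prod fun x e => v x ^ e) with hG
  refine ⟨((Fintype.piFinset t).filter Good).image (fun c => redF p (cntF c)), ?_, ?_⟩
  · -- set equality
    ext m
    simp only [Finset.coe_image, Set.mem_image, Finset.mem_coe, Finset.mem_filter,
      Fintype.mem_piFinset, Nf1, Set.mem_setOf_eq]
    constructor
    · rintro ⟨c, ⟨hc, hGc⟩, rfl⟩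
      refine ⟨c, ?_, ?_, ?_⟩
      · intro i x hx
        have h := hc i
        rw [hx, ht] at h
        simpa using h
      · intro s
        have := hGc s
        rw [cntF_apply] at this
        exact ⟨this, by rw [redF_inl, cntF_apply]⟩
      · intro s
        rw [redF_inr, cntF_apply]
    · rintro ⟨c, hc1, hc2, hc3⟩
      refine ⟨c, ⟨?_, ?_⟩, ?_⟩
      · intro i
        rw [ht]
        cases h : c i with
        | none => exact Finset.mem_insert_self _ _
        | some x => exact Finset.mem_insert_of_mem (Finset.mem_image_of_mem _ (hc1 i x h))
      · intro s
        rw [cntF_apply]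
        exact (hc2 s).1
      · ext x
        match x with
        | Sum.inl s => rw [redF_inl, cntF_apply, (hc2 s).2]
        | Sum.inr s => rw [redF_inr, cntF_apply, hc3 s]
  · -- the sum identity
    have h1 : ∀ i, v (Sum.inr s₀) + ∑ x ∈ ℓ i, v x = ∑ o ∈ t i, f o := by
      intro i
      rw [ht]
      rw [Finset.sum_insert (by simp), Finset.sum_image (fun a _ c _ h => Option.some_inj.mp h)]
      rfl
    have hprod : ∀ c : Fin k → Option (B ⊕ P),
        ((cntF c).prod fun x e => v x ^ e) = ∏ i, ((c i).elim 1 v) := by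
      intro c
      rw [cntF, ← Finsupp.prod_finset_sum_index (fun a => pow_zero _) (fun a b₁ b₂ => pow_add _ _ _)]
      refine Finset.prod_congr rfl fun i _ => ?_
      cases h : c i with
      | none => simp
      | some x => simp [Finsupp.prod_single_index]
    have hnone : ∀ c : Fin k → Option (B ⊕ P),
        v (Sum.inr s₀) ^ (Finset.univ.filter fun i => c i = none).card
          = ∏ i, ((c i).elim (v (Sum.inr s₀)) fun _ => 1) := by
      intro c
      rw [← Finset.prod_const, Finset.prod_filter]
      refine Finset.prod_congr rfl fun i _ => ?_
      cases h : c i <;> simp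
    have hterm : ∀ c : Fin k → Option (B ⊕ P),
        (∏ i, f (c i)) = v (Sum.inr s₀) ^ (Finset.univ.filter fun i => c i = none).card *
          ((cntF c).prod fun x e => v x ^ e) := by
      intro c
      rw [hprod, hnone, ← Finset.prod_mul_distrib]
      refine Finset.prod_congr rfl fun i _ => ?_
      cases h : c i <;> simp [hf]
    have hbad : ∀ c : Fin k → Option (B ⊕ P), ¬ Good c →
        ((cntF c).prod fun x e => v x ^ e) = 0 := by
      intro c hc
      rw [hGoodDef] at hc
      simp only [not_forall, not_lt] at hc
      obtain ⟨s, hs⟩ := hc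
      have hbs := hb s
      have hmem : Sum.inl s ∈ (cntF c).support := by
        rw [Finsupp.mem_support_iff]
        omega
      refine Finset.prod_eq_zero hmem ?_
      show v (Sum.inl s) ^ (cntF c (Sum.inl s)) = 0
      have : cntF c (Sum.inl s) = b s + (cntF c (Sum.inl s) - b s) := by omega
      rw [this, pow_add, hvb, zero_mul]
    -- degree bookkeeping
    have htot : ∀ c : Fin k → Option (B ⊕ P),
        (Finset.univ.filter fun i => c i = none).card + ((cntF c).sum fun _ e => e) = k := by
      intro c
      have h2 : ((cntF c).sum fun _ e => e)
          = ∑ i : Fin k, (if c i = none then 0 else 1) := by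
        rw [cntF, ← Finsupp.sum_finset_sum_index (fun a => rfl) (fun a b₁ b₂ => rfl)]
        refine Finset.sum_congr rfl fun i _ => ?_
        cases h : c i with
        | none => simp
        | some x => simp [Finsupp.sum_single_index]
      rw [h2, Finset.card_filter, ← Finset.sum_add_distrib]
      have h4 : ∀ i : Fin k, ((if c i = none then (1:ℕ) else 0) + if c i = none then 0 else 1) = 1 := by
        intro i; by_cases h : c i = none <;> simp [h]
      rw [Finset.sum_congr rfl fun i _ => h4 i]
      simp
    have hdegle : ∀ n : (B ⊕ P) →₀ ℕ,
        ((redF p n).sum fun _ e => e) ≤ (n.sum fun _ e => e) := by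
      intro n
      rw [Finsupp.sum_of_support_subset _ (redF_support_subset p n) _ (fun x _ => rfl)]
      exact Finset.sum_le_sum fun x _ => redF_le p n x
    have hdvd2 : ∀ n : (B ⊕ P) →₀ ℕ,
        p s₀ ∣ (n.sum fun _ e => e) - ((redF p n).sum fun _ e => e) := by
      intro n
      rw [Finsupp.sum_of_support_subset _ (redF_support_subset p n) _ (fun x _ => rfl),
        Finsupp.sum, ← Finset.sum_tsub_distrib n.support (fun x _ => redF_le p n x)]
      refine Finset.dvd_sum fun x _ => ?_
      match x with
      | Sum.inl s => simp
      | Sum.inr s =>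
        rw [redF_inr]
        have h3 : n (Sum.inr s) - n (Sum.inr s) % p s = p s * (n (Sum.inr s) / p s) := by
          have := Nat.div_add_mod (n (Sum.inr s)) (p s)
          omega
        rw [h3]
        exact (hdvd s).trans (Dvd.intro _ rfl)
    have hgood : ∀ c : Fin k → Option (B ⊕ P), Good c →
        v (Sum.inr s₀) ^ (Finset.univ.filter fun i => c i = none).card *
          ((cntF c).prod fun x e => v x ^ e) = G (redF p (cntF c)) := by
      intro c hc
      set n := cntF c with hn
      set m := redF p n with hm
      have hps₀ : 0 < p s₀ := by have := hp s₀; omega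
      have hksub : k - (m.sum fun _ e => e)
          = (Finset.univ.filter fun i => c i = none).card
            + ((n.sum fun _ e => e) - (m.sum fun _ e => e)) := by
        have htotn := htot c
        rw [← hn] at htotn
        have hdeg := hdegle n
        rw [← hm] at hdeg
        omega
      have hexp : v (Sum.inr s₀) ^ ((k - m.sum fun _ e => e) % p s₀)
          = v (Sum.inr s₀) ^ (Finset.univ.filter fun i => c i = none).card := by
        rw [← pow_eq_pow_mod_of_pow_eq_one (hvp s₀), hksub, pow_add]
        obtain ⟨q, hq⟩ := hdvd2 n
        rw [hq, pow_mul, hvp s₀, one_pow, mul_one]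
      have hmn : (m.prod fun x e => v x ^ e) = (n.prod fun x e => v x ^ e) := by
        rw [Finsupp.prod_of_support_subset _ (redF_support_subset p n) _
          (fun x _ => pow_zero _), Finsupp.prod]
        refine Finset.prod_congr rfl fun x _ => ?_
        match x with
        | Sum.inl s => rw [redF_inl]
        | Sum.inr s => rw [redF_inr, ← pow_eq_pow_mod_of_pow_eq_one (hvp s)]
      rw [hG]
      dsimp only
      rw [hexp, hmn]
    -- assemble
    calc (∏ i, (v (Sum.inr s₀) + ∑ x ∈ ℓ i, v x))
        = ∑ c ∈ Fintype.piFinset t, ∏ i, f (c i) := by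
          rw [Finset.prod_congr rfl fun i _ => h1 i, Finset.prod_univ_sum]
      _ = ∑ c ∈ (Fintype.piFinset t).filter Good, ∏ i, f (c i) := by
          rw [← Finset.sum_filter_add_sum_filter_not (Fintype.piFinset t) Good]
          have hz : ∑ c ∈ (Fintype.piFinset t).filter (fun c => ¬ Good c), ∏ i, f (c i) = 0 := by
            refine Finset.sum_eq_zero fun c hc => ?_
            rw [hterm, hbad c (Finset.mem_filter.mp hc).2, mul_zero]
          rw [hz, add_zero]
      _ = ∑ c ∈ (Fintype.piFinset t).filter Good, G (redF p (cntF c)) := by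
          refine Finset.sum_congr rfl fun c hc => ?_
          rw [hterm, hgood c (Finset.mem_filter.mp hc).2]
      _ = ∑ m ∈ ((Fintype.piFinset t).filter Good).image (fun c => redF p (cntF c)), G m :=
          sum_image_idem hadd _ _ _
end

section
/- Let s₀ be an arbitrary periodic variable. Every product t of linear terms each containing s₀, of length exceeding Σ_{bounded s}(b(s)−1) + Σ_{periodic s}(lcm(p(s), p(s₀)) − 1), admits a strict subproduct t' with nf(t') = nf(t). -/
open Finset
namespace S0Cut

variable {X : Type*} [DecidableEq X]

def cnt {n : ℕ} (g : Fin n → X) (y : X) : ℕ := (univ.filter (fun i => g i = y)).card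

lemma fiber_update {n : ℕ} (g : Fin n → X) (j : Fin n) (x y : X) :
    (univ.filter (fun i => Function.update g j x i = y)) =
      if y = x then insert j ((univ.filter (fun i => g i = y)).erase j)
      else (univ.filter (fun i => g i = y)).erase j := by
  ext i
  by_cases hij : i = j
  · subst hij
    by_cases hxy : y = x <;> simp [hxy, Function.update_self, eq_comm]
  · by_cases hxy : y = x <;>
      simp [hxy, Function.update_of_ne hij, hij, mem_erase]

lemma cnt_update_of_ne {n : ℕ} (g : Fin n → X) (j : Fin n) (x y : X)
    (h1 : y ≠ x) (h2 : y ≠ g j) : cnt (Function.update g j x) y = cnt g y := by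
  unfold cnt
  rw [fiber_update, if_neg h1, erase_eq_of_notMem]
  simp [h2.symm]

lemma cnt_update_target {n : ℕ} (g : Fin n → X) (j : Fin n) (x : X)
    (h : g j ≠ x) : cnt (Function.update g j x) x = cnt g x + 1 := by
  unfold cnt
  rw [fiber_update, if_pos rfl, erase_eq_of_notMem (by simp [h]),
    card_insert_of_notMem (by simp [h])]

lemma cnt_update_source {n : ℕ} (g : Fin n → X) (j : Fin n) (x : X)
    (h : g j ≠ x) : cnt (Function.update g j x) (g j) + 1 = cnt g (g j) := by
  unfold cnt
  rw [fiber_update, if_neg h, card_erase_add_one (by simp)]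

section comb

variable [Fintype X] (s0 : X) (cap : X → ℕ) {n : ℕ} (W : Fin n → Finset X)

def Mem (g : Fin n → X) : Prop := ∀ i, g i = s0 ∨ g i ∈ W i

def Red (g : Fin n → X) : Prop := ∀ y, y ≠ s0 → cnt g y + 1 ≤ cap y

def F (g : Fin n → X) : ℕ := ∑ y ∈ univ.erase s0, cnt g y

variable {s0 cap W}

/-- The inner augmentation loop: given a maximum reduced placement `h`, a reduced
placement `g` and a pending item `x` (with slack), the pending item can be placed
by modifying `g` only on the support of `h`. `hh` is the "virtual augmentation"
certificate. -/
lemma inner (h : Fin n → X) (hMemh : Mem s0 W h) (hRedh : Red s0 cap h)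
    (hmax : ∀ k, Mem s0 W k → Red s0 cap k → F s0 k ≤ F s0 h) :
    ∀ (m : ℕ) (g : Fin n → X) (x : X) (hh : Fin n → X),
    Mem s0 W g → Red s0 cap g → x ≠ s0 → cnt g x + 2 ≤ cap x →
    Mem s0 W hh → (∀ y, y ≠ s0 → cnt hh y = cnt h y + if y = x then 1 else 0) →
    (∀ i, h i ≠ s0 → g i ≠ h i → hh i = h i) →
    (univ.filter fun i => h i ≠ s0 ∧ g i ≠ h i).card ≤ m →
    ∃ g', Mem s0 W g' ∧
      (∀ y, y ≠ s0 → cnt g' y = cnt g y + if y = x then 1 else 0) ∧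
      (∀ i, h i = s0 → g' i = g i) := by
  intro m
  induction m using Nat.strong_induction_on with
  | _ m IH =>
  intro g x hh hMemg hRedg hxs0 hslack hMemhh hcnthh hagree hcard
  -- Step 1 : cnt h x + 1 = cap x
  have hhx : cnt h x + 1 = cap x := by
    by_contra hne
    have h1 : cnt h x + 2 ≤ cap x := by
      have := hRedh x hxs0; omega
    have hRedhh : Red s0 cap hh := by
      intro y hy
      rw [hcnthh y hy]
      by_cases hyx : y = x
      · subst hyx; simp; omega
      · simpa [hyx] using hRedh y hy
    have hF : F s0 hh = F s0 h + 1 := by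
      unfold F
      rw [Finset.sum_congr rfl (fun y hy => hcnthh y (Finset.ne_of_mem_erase hy)),
        Finset.sum_add_distrib, Finset.sum_ite_eq' (univ.erase s0) x (fun _ => 1)]
      simp [hxs0]
    have := hmax hh hMemhh hRedhh
    omega
  -- Step 2 : find j with h j = x and g j ≠ x
  have hcntlt : cnt g x < cnt h x := by omega
  have hex : ∃ j, h j = x ∧ g j ≠ x := by
    by_contra hc
    push_neg at hc
    have hsub : (univ.filter (fun i => h i = x)) ⊆ (univ.filter (fun i => g i = x)) := by
      intro i hi
      simp only [mem_filter, mem_univ, true_and] at hi ⊢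
      exact hc i hi
    have := Finset.card_le_card hsub
    unfold cnt at hcntlt
    omega
  obtain ⟨j, hhj, hgj⟩ := hex
  have hhjs0 : h j ≠ s0 := by rw [hhj]; exact hxs0
  have hgjh : g j ≠ h j := by rw [hhj]; exact hgj
  have hhhj : hh j = x := by rw [hagree j hhjs0 hgjh]; exact hhj
  have hxWj : x ∈ W j := by
    rcases hMemh j with h' | h'
    · exact absurd h' hhjs0
    · rwa [hhj] at h'
  by_cases hgjs0 : g j = s0
  · -- Case A : slot j is free in g, place x there
    refine ⟨Function.update g j x, ?_, ?_, ?_⟩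
    · intro i
      by_cases hij : i = j
      · subst hij; right; simpa [Function.update_self] using hxWj
      · rw [Function.update_of_ne hij]; exact hMemg i
    · intro y hy
      by_cases hyx : y = x
      · rw [hyx, if_pos rfl, cnt_update_target g j x (by rw [hgjs0]; exact Ne.symm hxs0)]
      · rw [if_neg hyx, cnt_update_of_ne g j x y hyx (by rw [hgjs0]; exact hy), add_zero]
    · intro i hi
      have : i ≠ j := fun he => hhjs0 (he ▸ hi)
      rw [Function.update_of_ne this]
  · -- Case B : slot j is occupied by y₁ = g j; displace it
    have hy₁s0 : g j ≠ s0 := hgjs0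
    have hy₁x : g j ≠ x := hgj
    have hgpos : 1 ≤ cnt g (g j) := by
      unfold cnt
      refine Nat.one_le_iff_ne_zero.2 (fun h0 => ?_)
      rw [Finset.card_eq_zero] at h0
      have hjmem2 : j ∈ (univ.filter (fun i => g i = g j)) := by simp
      rw [h0] at hjmem2; exact absurd hjmem2 (notMem_empty j)
    have hMemg₁ : Mem s0 W (Function.update g j x) := by
      intro i
      by_cases hij : i = j
      · subst hij; right; simpa [Function.update_self] using hxWj
      · rw [Function.update_of_ne hij]; exact hMemg i
    have hcntg₁ : ∀ y, cnt (Function.update g j x) y + (if y = g j then 1 else 0)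
        = cnt g y + (if y = x then 1 else 0) := by
      intro y
      by_cases hyx : y = x
      · rw [hyx, if_pos rfl, if_neg (Ne.symm hy₁x), cnt_update_target g j x hgj, add_zero]
      · by_cases hyy₁ : y = g j
        · rw [hyy₁, if_pos rfl, if_neg hy₁x, add_zero, cnt_update_source g j x hgj]
        · rw [if_neg hyx, if_neg hyy₁, cnt_update_of_ne g j x y hyx hyy₁]
    have hRedg₁ : Red s0 cap (Function.update g j x) := by
      intro y hy
      have hc := hcntg₁ y
      by_cases hyx : y = x
      · rw [hyx] at hc ⊢
        rw [if_pos rfl, if_neg (Ne.symm hy₁x)] at hc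
        omega
      · by_cases hyy₁ : y = g j
        · rw [if_neg hyx, if_pos hyy₁] at hc
          have := hRedg y hy; omega
        · rw [if_neg hyx, if_neg hyy₁] at hc
          have := hRedg y hy; omega
    have hslack₁ : cnt (Function.update g j x) (g j) + 2 ≤ cap (g j) := by
      have hc := hcntg₁ (g j)
      rw [if_pos rfl, if_neg hy₁x] at hc
      have := hRedg (g j) hy₁s0
      omega
    -- counts of the new certificate
    have hhhjx : hh j ≠ g j := by rw [hhhj]; exact Ne.symm hy₁x
    have hhhcnt : ∀ y, y ≠ s0 →
        cnt (Function.update hh j (g j)) y = cnt h y + if y = g j then 1 else 0 := by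
      intro y hy
      by_cases hyy₁ : y = g j
      · rw [hyy₁, if_pos rfl, cnt_update_target hh j _ hhhjx, hcnthh _ hy₁s0,
          if_neg hy₁x]
      · by_cases hyx : y = x
        · have h2 : cnt (Function.update hh j (g j)) (hh j) + 1 = cnt hh (hh j) :=
            cnt_update_source hh j (g j) hhhjx
          rw [hhhj] at h2
          have h3 := hcnthh x hxs0
          rw [if_pos rfl] at h3
          rw [hyx, if_neg (hyx ▸ hyy₁)]
          omega
        · rw [cnt_update_of_ne hh j (g j) y hyy₁ (by rw [hhhj]; exact hyx),
            hcnthh y hy, if_neg hyx, if_neg hyy₁, add_zero]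
    have hMemhh' : Mem s0 W (Function.update hh j (g j)) := by
      intro i
      by_cases hij : i = j
      · right
        rw [hij, Function.update_self]
        rcases hMemg j with h' | h'
        · exact absurd h' hgjs0
        · exact h'
      · rw [Function.update_of_ne hij]; exact hMemhh i
    have hagree' : ∀ i, h i ≠ s0 → (Function.update g j x) i ≠ h i →
        (Function.update hh j (g j)) i = h i := by
      intro i hi1 hi2
      have hij : i ≠ j := by
        intro he; subst he
        rw [Function.update_self] at hi2
        exact hi2 hhj.symm
      rw [Function.update_of_ne hij]
      rw [Function.update_of_ne hij] at hi2
      exact hagree i hi1 hi2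
    -- the measure decreases
    have hjmem : j ∈ (univ.filter fun i => h i ≠ s0 ∧ g i ≠ h i) := by
      simp only [mem_filter, mem_univ, true_and]
      exact ⟨hhjs0, hgjh⟩
    have hm1 : 1 ≤ m := by
      have : 1 ≤ (univ.filter fun i => h i ≠ s0 ∧ g i ≠ h i).card :=
        Finset.card_pos.2 ⟨j, hjmem⟩
      omega
    have hcard' : (univ.filter fun i => h i ≠ s0 ∧ (Function.update g j x) i ≠ h i).card
        ≤ m - 1 := by
      have hsub : (univ.filter fun i => h i ≠ s0 ∧ (Function.update g j x) i ≠ h i) ⊆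
          (univ.filter fun i => h i ≠ s0 ∧ g i ≠ h i).erase j := by
        intro i hi
        simp only [mem_filter, mem_univ, true_and] at hi
        have hij : i ≠ j := by
          intro he; subst he
          rw [Function.update_self] at hi
          exact hi.2 hhj.symm
        rw [Function.update_of_ne hij] at hi
        refine Finset.mem_erase.2 ⟨hij, ?_⟩
        simp only [mem_filter, mem_univ, true_and]
        exact hi
      have h4 := Finset.card_le_card hsub
      have h5 := Finset.card_erase_of_mem hjmem
      omega
    obtain ⟨g', hg'Mem, hg'cnt, hg'fix⟩ :=
      IH (m - 1) (by omega) (Function.update g j x) (g j) (Function.update hh j (g j))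
        hMemg₁ hRedg₁ hy₁s0 hslack₁ hMemhh' hhhcnt hagree' hcard'
    refine ⟨g', hg'Mem, ?_, ?_⟩
    · intro y hy
      rw [hg'cnt y hy]
      have hc := hcntg₁ y
      by_cases hyx : y = x
      · rw [if_pos hyx] at hc ⊢
        rw [if_neg (fun h' => hy₁x ((hyx ▸ h' : x = g j)).symm)] at hc ⊢
        omega
      · rw [if_neg hyx] at hc ⊢
        by_cases hyy₁ : y = g j
        · rw [if_pos hyy₁] at hc ⊢
          omega
        · rw [if_neg hyy₁] at hc ⊢
          omega
    · intro i hi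
      have hij : i ≠ j := fun he => hhjs0 (he ▸ hi)
      rw [hg'fix i hi, Function.update_of_ne hij]

/-- Outer loop: any reduced placement can be rearranged (preserving all counts)
so that it is supported inside the support of the maximum placement `h`. -/
lemma exch (h : Fin n → X) (hMemh : Mem s0 W h) (hRedh : Red s0 cap h)
    (hmax : ∀ k, Mem s0 W k → Red s0 cap k → F s0 k ≤ F s0 h) :
    ∀ (m : ℕ) (g : Fin n → X), Mem s0 W g → Red s0 cap g →
    (univ.filter fun i => h i = s0 ∧ g i ≠ s0).card ≤ m →
    ∃ g', Mem s0 W g' ∧ (∀ y, y ≠ s0 → cnt g' y = cnt g y) ∧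
      ∀ i, h i = s0 → g' i = s0 := by
  intro m
  induction m using Nat.strong_induction_on with
  | _ m IH =>
  intro g hMemg hRedg hcard
  rcases (univ.filter fun i => h i = s0 ∧ g i ≠ s0).eq_empty_or_nonempty with he | hne
  · refine ⟨g, hMemg, fun y _ => rfl, fun i hi => ?_⟩
    by_contra hgi
    have : i ∈ (univ.filter fun i => h i = s0 ∧ g i ≠ s0) := by
      simp only [mem_filter, mem_univ, true_and]; exact ⟨hi, hgi⟩
    rw [he] at this; exact absurd this (notMem_empty i)
  · obtain ⟨i₀, hi₀⟩ := hne
    simp only [mem_filter, mem_univ, true_and] at hi₀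
    obtain ⟨hhi₀, hgi₀⟩ := hi₀
    have hx₀W : g i₀ ∈ W i₀ := by
      rcases hMemg i₀ with h' | h'
      · exact absurd h' hgi₀
      · exact h'
    have hx₀s0 : g i₀ ≠ s0 := hgi₀
    -- g₀ : remove the item at i₀
    have hMemg₀ : Mem s0 W (Function.update g i₀ s0) := by
      intro i
      by_cases hij : i = i₀
      · left; rw [hij, Function.update_self]
      · rw [Function.update_of_ne hij]; exact hMemg i
    have hcntg₀ : ∀ y, y ≠ s0 →
        cnt (Function.update g i₀ s0) y + (if y = g i₀ then 1 else 0) = cnt g y := by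
      intro y hy
      by_cases hyx : y = g i₀
      · rw [hyx, if_pos rfl, cnt_update_source g i₀ s0 hx₀s0]
      · rw [if_neg hyx, add_zero, cnt_update_of_ne g i₀ s0 y hy hyx]
    have hRedg₀ : Red s0 cap (Function.update g i₀ s0) := by
      intro y hy
      have := hcntg₀ y hy
      have := hRedg y hy
      omega
    have hslack₀ : cnt (Function.update g i₀ s0) (g i₀) + 2 ≤ cap (g i₀) := by
      have h1 := hcntg₀ (g i₀) hx₀s0
      rw [if_pos rfl] at h1
      have := hRedg (g i₀) hx₀s0
      omega
    -- the certificate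
    have hhi₀x : h i₀ ≠ g i₀ := by rw [hhi₀]; exact Ne.symm hx₀s0
    have hMemhh : Mem s0 W (Function.update h i₀ (g i₀)) := by
      intro i
      by_cases hij : i = i₀
      · right; rw [hij, Function.update_self]; exact hx₀W
      · rw [Function.update_of_ne hij]; exact hMemh i
    have hcnthh : ∀ y, y ≠ s0 →
        cnt (Function.update h i₀ (g i₀)) y = cnt h y + if y = g i₀ then 1 else 0 := by
      intro y hy
      by_cases hyx : y = g i₀
      · rw [hyx, if_pos rfl, cnt_update_target h i₀ (g i₀) hhi₀x]
      · rw [if_neg hyx, add_zero, cnt_update_of_ne h i₀ (g i₀) y hyx (by rw [hhi₀]; exact hy)]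
    have hagree : ∀ i, h i ≠ s0 → (Function.update g i₀ s0) i ≠ h i →
        (Function.update h i₀ (g i₀)) i = h i := by
      intro i hi _
      have hij : i ≠ i₀ := fun he => hi (he ▸ hhi₀)
      rw [Function.update_of_ne hij]
    have hfuel : (univ.filter fun i =>
        h i ≠ s0 ∧ (Function.update g i₀ s0) i ≠ h i).card ≤ n := by
      refine le_trans (card_filter_le _ _) ?_
      simp
    obtain ⟨g₁, hg₁Mem, hg₁cnt, hg₁fix⟩ :=
      inner h hMemh hRedh hmax n (Function.update g i₀ s0) (g i₀)
        (Function.update h i₀ (g i₀)) hMemg₀ hRedg₀ hx₀s0 hslack₀ hMemhh hcnthh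
        hagree hfuel
    have hg₁cnt' : ∀ y, y ≠ s0 → cnt g₁ y = cnt g y := by
      intro y hy
      have h1 := hg₁cnt y hy
      have h2 := hcntg₀ y hy
      by_cases hyx : y = g i₀ <;> [rw [if_pos hyx] at h1 h2; rw [if_neg hyx] at h1 h2] <;>
        omega
    have hRedg₁ : Red s0 cap g₁ := by
      intro y hy; rw [hg₁cnt' y hy]; exact hRedg y hy
    have hi₀fix : g₁ i₀ = s0 := by
      rw [hg₁fix i₀ hhi₀, Function.update_self]
    have hi₀mem : i₀ ∈ (univ.filter fun i => h i = s0 ∧ g i ≠ s0) := by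
      simp only [mem_filter, mem_univ, true_and]; exact ⟨hhi₀, hgi₀⟩
    have hm1 : 1 ≤ m := by
      have : 1 ≤ (univ.filter fun i => h i = s0 ∧ g i ≠ s0).card :=
        Finset.card_pos.2 ⟨i₀, hi₀mem⟩
      omega
    have hcard₁ : (univ.filter fun i => h i = s0 ∧ g₁ i ≠ s0).card ≤ m - 1 := by
      have hsub : (univ.filter fun i => h i = s0 ∧ g₁ i ≠ s0) ⊆
          (univ.filter fun i => h i = s0 ∧ g i ≠ s0).erase i₀ := by
        intro i hi
        simp only [mem_filter, mem_univ, true_and] at hi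
        have hij : i ≠ i₀ := by
          intro he; subst he
          exact hi.2 hi₀fix
        refine Finset.mem_erase.2 ⟨hij, ?_⟩
        simp only [mem_filter, mem_univ, true_and]
        refine ⟨hi.1, ?_⟩
        have := hg₁fix i hi.1
        rw [Function.update_of_ne hij] at this
        rw [← this]
        exact hi.2
      have h4 := Finset.card_le_card hsub
      have h5 := Finset.card_erase_of_mem hi₀mem
      omega
    obtain ⟨g', hg'Mem, hg'cnt, hg'fix⟩ := IH (m - 1) (by omega) g₁ hg₁Mem hRedg₁ hcard₁
    exact ⟨g', hg'Mem, fun y hy => (hg'cnt y hy).trans (hg₁cnt' y hy), hg'fix⟩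

lemma sum_cnt (g : Fin n → X) : ∑ y : X, cnt g y = n := by
  have := Finset.card_eq_sum_card_fiberwise
    (f := g) (s := (univ : Finset (Fin n))) (t := (univ : Finset X))
    (fun x _ => mem_univ _)
  simpa [cnt] using this.symm

lemma cnt_s0_eq {g₁ g₂ : Fin n → X}
    (hc : ∀ y, y ≠ s0 → cnt g₁ y = cnt g₂ y) : cnt g₁ s0 = cnt g₂ s0 := by
  have h1 : cnt g₁ s0 + ∑ y ∈ univ.erase s0, cnt g₁ y = n := by
    rw [Finset.add_sum_erase _ _ (mem_univ s0)]; exact sum_cnt g₁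
  have h2 : cnt g₂ s0 + ∑ y ∈ univ.erase s0, cnt g₂ y = n := by
    rw [Finset.add_sum_erase _ _ (mem_univ s0)]; exact sum_cnt g₂
  have hs : ∑ y ∈ univ.erase s0, cnt g₁ y = ∑ y ∈ univ.erase s0, cnt g₂ y :=
    Finset.sum_congr rfl (fun y hy => hc y (Finset.ne_of_mem_erase hy))
  omega

variable {R : Type*} [CommSemiring R]

lemma prod_pow_cnt (v : X → R) (g : Fin n → X) :
    (∏ i, v (g i)) = ∏ y : X, v y ^ cnt g y := by
  rw [← Finset.prod_fiberwise (univ : Finset (Fin n)) g (fun i => v (g i))]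
  refine Finset.prod_congr rfl (fun y _ => ?_)
  rw [Finset.prod_congr rfl (fun i hi => ?_), Finset.prod_const]
  · rfl
  · simp only [mem_filter] at hi
    rw [hi.2]

lemma prod_eq_of_cnt_eq (v : X → R) {g₁ g₂ : Fin n → X}
    (hc : ∀ y, y ≠ s0 → cnt g₁ y = cnt g₂ y) :
    (∏ i, v (g₁ i)) = ∏ i, v (g₂ i) := by
  rw [prod_pow_cnt v g₁, prod_pow_cnt v g₂]
  refine Finset.prod_congr rfl (fun y _ => ?_)
  by_cases hy : y = s0
  · rw [hy, cnt_s0_eq hc]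
  · rw [hc y hy]

/-- Phase 1 : any placement can be reduced (or its monomial is zero). -/
lemma reduce (hcap1 : ∀ y, 1 ≤ cap y) (v : X → R)
    (hval : ∀ y, y ≠ s0 → v y ^ cap y = 0 ∨ (v y ^ cap y = 1 ∧ v s0 ^ cap y = 1)) :
    ∀ (m : ℕ) (g : Fin n → X), Mem s0 W g → F s0 g ≤ m →
    (∏ i, v (g i)) = 0 ∨
      ∃ g₁, Mem s0 W g₁ ∧ Red s0 cap g₁ ∧ (∏ i, v (g₁ i)) = ∏ i, v (g i) := by
  intro m
  induction m using Nat.strong_induction_on with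
  | _ m IH =>
  intro g hMemg hFg
  by_cases hred : Red s0 cap g
  · exact Or.inr ⟨g, hMemg, hred, rfl⟩
  · simp only [Red, not_forall] at hred
    obtain ⟨y₀, hy₀, hcnt⟩ := hred
    rw [not_le] at hcnt
    have hcnt' : cap y₀ ≤ cnt g y₀ := by omega
    have hfibcard : cap y₀ ≤ (univ.filter (fun i => g i = y₀)).card := hcnt'
    rcases hval y₀ hy₀ with hzero | ⟨hone, hs0one⟩
    · -- bounded variable : monomial is zero
      left
      rw [← Finset.prod_mul_prod_compl (univ.filter (fun i => g i = y₀)) (fun i => v (g i))]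
      have h1 : (∏ i ∈ univ.filter (fun i => g i = y₀), v (g i)) = 0 := by
        rw [Finset.prod_congr rfl (fun i hi => ?_), Finset.prod_const]
        · show v y₀ ^ (univ.filter (fun i => g i = y₀)).card = 0
          have : (univ.filter (fun i => g i = y₀)).card =
              cap y₀ + ((univ.filter (fun i => g i = y₀)).card - cap y₀) := by omega
          rw [this, pow_add, hzero, zero_mul]
        · simp only [mem_filter] at hi
          rw [hi.2]
      rw [h1, zero_mul]
    · -- periodic variable : flip cap y₀ occurrences to s0
      obtain ⟨S, hS, hScard⟩ := Finset.exists_subset_card_eq hfibcard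
      have hSval : ∀ i ∈ S, g i = y₀ := by
        intro i hi
        have := hS hi
        simp only [mem_filter] at this
        exact this.2
      set g₂ := (fun i => if i ∈ S then s0 else g i) with hg₂def
      have hMemg₂ : Mem s0 W g₂ := by
        intro i
        by_cases hiS : i ∈ S
        · left; simp [hg₂def, hiS]
        · rw [hg₂def]; simp only [hiS, if_false]; exact hMemg i
      have hprod : (∏ i, v (g₂ i)) = ∏ i, v (g i) := by
        rw [← Finset.prod_mul_prod_compl S (fun i => v (g₂ i)),
          ← Finset.prod_mul_prod_compl S (fun i => v (g i))]
        have e1 : (∏ i ∈ S, v (g₂ i)) = 1 := by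
          rw [Finset.prod_congr rfl (fun i hi => by
            show v (g₂ i) = v s0
            rw [hg₂def]; simp [hi]), Finset.prod_const, hScard, hs0one]
        have e2 : (∏ i ∈ S, v (g i)) = 1 := by
          rw [Finset.prod_congr rfl (fun i hi => by
            show v (g i) = v y₀
            rw [hSval i hi]), Finset.prod_const, hScard, hone]
        have e3 : (∏ i ∈ Sᶜ, v (g₂ i)) = ∏ i ∈ Sᶜ, v (g i) := by
          refine Finset.prod_congr rfl (fun i hi => ?_)
          simp only [mem_compl] at hi
          rw [hg₂def]; simp [hi]
        rw [e1, e2, e3, one_mul]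
      have hfib₂ : ∀ y, y ≠ s0 →
          (univ.filter (fun i => g₂ i = y)) = (univ.filter (fun i => g i = y)) \ S := by
        intro y hy
        ext i
        simp only [mem_filter, mem_univ, true_and, mem_sdiff, hg₂def]
        by_cases hiS : i ∈ S
        · simp [hiS, Ne.symm hy]
        · simp [hiS]
      have hcnt₂le : ∀ y, y ≠ s0 → cnt g₂ y ≤ cnt g y := by
        intro y hy
        unfold cnt
        rw [hfib₂ y hy]
        exact Finset.card_le_card (Finset.sdiff_subset)
      have hcnt₂lt : cnt g₂ y₀ < cnt g y₀ := by
        unfold cnt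
        rw [hfib₂ y₀ hy₀, Finset.card_sdiff_of_subset hS, hScard]
        have := hcap1 y₀
        omega
      have hFlt : F s0 g₂ < F s0 g := by
        unfold F
        refine Finset.sum_lt_sum (fun y hy => hcnt₂le y (Finset.ne_of_mem_erase hy))
          ⟨y₀, Finset.mem_erase.2 ⟨hy₀, mem_univ y₀⟩, hcnt₂lt⟩
      have hm1 : 1 ≤ m := by omega
      rcases IH (m - 1) (by omega) g₂ hMemg₂ (by omega) with h0 | ⟨g₁, hm₁, hr₁, hp₁⟩
      · left; rw [← hprod]; exact h0
      · exact Or.inr ⟨g₁, hm₁, hr₁, hp₁.trans hprod⟩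

/-- existence of a maximum reduced placement -/
lemma exists_max (hcap1 : ∀ y, 1 ≤ cap y) :
    ∃ h, Mem s0 W h ∧ Red s0 cap h ∧
      ∀ k, Mem s0 W k → Red s0 cap k → F s0 k ≤ F s0 h := by
  classical
  have hne : (univ.filter (fun k : Fin n → X => Mem s0 W k ∧ Red s0 cap k)).Nonempty := by
    refine ⟨fun _ => s0, ?_⟩
    simp only [mem_filter, mem_univ, true_and]
    constructor
    · intro i; exact Or.inl rfl
    · intro y hy
      have : cnt (fun _ : Fin n => s0) y = 0 := by
        unfold cnt
        rw [Finset.card_eq_zero, Finset.filter_eq_empty_iff]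
        intro i _
        exact Ne.symm hy
      rw [this]
      exact hcap1 y
  obtain ⟨h, hmem, hmax⟩ := Finset.exists_max_image _ (F s0) hne
  simp only [mem_filter, mem_univ, true_and] at hmem
  refine ⟨h, hmem.1, hmem.2, fun k hk1 hk2 => ?_⟩
  exact hmax k (by simp only [mem_filter, mem_univ, true_and]; exact ⟨hk1, hk2⟩)

end comb

section idem
variable {R : Type*} [CommSemiring R]

lemma sum_idem (hadd : ∀ a : R, a + a = a) {α : Type*} (s : Finset α) (f : α → R) :
    (∑ x ∈ s, f x) + ∑ x ∈ s, f x = ∑ x ∈ s, f x := by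
  rw [← Finset.sum_add_distrib]
  exact Finset.sum_congr rfl (fun x _ => hadd _)

lemma absorb_mem (hadd : ∀ a : R, a + a = a) {α : Type*} [DecidableEq α]
    {s : Finset α} {f : α → R} {a : α} (ha : a ∈ s) :
    f a + ∑ x ∈ s, f x = ∑ x ∈ s, f x := by
  rw [← Finset.add_sum_erase s f ha, ← add_assoc, hadd]

lemma absorb_subset (hadd : ∀ a : R, a + a = a) {α : Type*} [DecidableEq α]
    {s t : Finset α} (hst : s ⊆ t) (f : α → R) :
    (∑ x ∈ s, f x) + ∑ x ∈ t, f x = ∑ x ∈ t, f x := by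
  rw [← Finset.sum_sdiff hst, ← add_assoc, add_comm (∑ x ∈ s, f x), add_assoc,
    sum_idem hadd]

lemma absorb_forall (hadd : ∀ a : R, a + a = a) {α : Type*}
    {s : Finset α} {f : α → R} {X : R} (H : ∀ a ∈ s, f a + X = X) :
    (∑ x ∈ s, f x) + X = X := by
  induction s using Finset.cons_induction with
  | empty => simp
  | cons a s ha IH =>
    rw [Finset.sum_cons, add_assoc, IH (fun b hb => H b (Finset.mem_cons.2 (Or.inr hb))),
      H a (Finset.mem_cons_self a s)]

end idem

section core

/-- The core combinatorial-algebraic lemma. -/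
lemma core {X : Type*} [DecidableEq X] [Fintype X]
    (s0 : X) (cap : X → ℕ) (hcap1 : ∀ y, 1 ≤ cap y)
    {n : ℕ} (W : Fin n → Finset X) (hW : ∀ i, s0 ∉ W i)
    (hn : (∑ y ∈ (univ : Finset X).erase s0, (cap y - 1)) + cap s0 ≤ n) :
    ∃ D : Finset (Fin n), D.card = cap s0 ∧
      ∀ (R : Type*) [CommSemiring R] (hadd : ∀ a : R, a + a = a) (v : X → R),
        (∀ y, y ≠ s0 → v y ^ cap y = 0 ∨ (v y ^ cap y = 1 ∧ v s0 ^ cap y = 1)) →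
        v s0 ^ cap s0 = 1 →
        (∏ i, (v s0 + ∑ x ∈ W i, v x)) = ∏ i ∈ Dᶜ, (v s0 + ∑ x ∈ W i, v x) := by
  classical
  obtain ⟨h, hMemh, hRedh, hmax⟩ := exists_max (s0 := s0) (cap := cap) (W := W) hcap1
  -- the support of h is small
  have hFh : F s0 h ≤ ∑ y ∈ (univ : Finset X).erase s0, (cap y - 1) := by
    refine Finset.sum_le_sum (fun y hy => ?_)
    have := hRedh y (Finset.ne_of_mem_erase hy)
    omega
  have hsplit : cnt h s0 + F s0 h = n := by
    unfold F
    rw [Finset.add_sum_erase _ _ (mem_univ s0)]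
    exact sum_cnt h
  have hD0 : cap s0 ≤ (univ.filter (fun i => h i = s0)).card := by
    have : (univ.filter (fun i => h i = s0)).card = cnt h s0 := rfl
    omega
  obtain ⟨D, hDsub, hDcard⟩ := Finset.exists_subset_card_eq hD0
  have hDs0 : ∀ i ∈ D, h i = s0 := by
    intro i hi
    have := hDsub hi
    simp only [mem_filter] at this
    exact this.2
  refine ⟨D, hDcard, ?_⟩
  intro R _ hadd v hval hvs0
  set t : Fin n → Finset X := fun i => insert s0 (W i) with ht
  set t' : Fin n → Finset X := fun i => if i ∈ D then {s0} else insert s0 (W i) with ht'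
  -- expansion of the full product
  have expand1 : (∏ i, (v s0 + ∑ x ∈ W i, v x)) =
      ∑ g ∈ Fintype.piFinset t, ∏ i, v (g i) := by
    rw [Finset.prod_congr rfl (fun i _ => ?_), Finset.prod_univ_sum t (fun _ x => v x)]
    rw [ht]
    exact (Finset.sum_insert (hW i)).symm
  -- expansion of the subproduct
  have expand2 : (∏ i ∈ Dᶜ, (v s0 + ∑ x ∈ W i, v x)) =
      ∑ g ∈ Fintype.piFinset t', ∏ i, v (g i) := by
    have e0 : (∏ i, (∑ x ∈ t' i, v x)) =
        (∏ i ∈ D, (∑ x ∈ t' i, v x)) * ∏ i ∈ Dᶜ, (∑ x ∈ t' i, v x) :=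
      (Finset.prod_mul_prod_compl D _).symm
    have e1 : (∏ i ∈ D, (∑ x ∈ t' i, v x)) = 1 := by
      rw [Finset.prod_congr rfl (fun i hi => ?_), Finset.prod_const, hDcard, hvs0]
      rw [ht']
      simp only [hi, if_pos]
      exact Finset.sum_singleton _ _
    have e2 : (∏ i ∈ Dᶜ, (∑ x ∈ t' i, v x)) = ∏ i ∈ Dᶜ, (v s0 + ∑ x ∈ W i, v x) := by
      refine Finset.prod_congr rfl (fun i hi => ?_)
      simp only [mem_compl] at hi
      rw [ht']
      simp only [hi, if_false]
      exact Finset.sum_insert (hW i)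
    rw [← e2, ← one_mul (∏ i ∈ Dᶜ, (∑ x ∈ t' i, v x)), ← e1, ← e0,
      Finset.prod_univ_sum t' (fun _ x => v x)]
  rw [expand1, expand2]
  -- G' ⊆ G
  have hsub : Fintype.piFinset t' ⊆ Fintype.piFinset t := by
    intro g hg
    rw [Fintype.mem_piFinset] at hg ⊢
    intro i
    have := hg i
    rw [ht'] at this
    by_cases hi : i ∈ D
    · simp only [hi, if_pos, Finset.mem_singleton] at this
      rw [ht, this]
      exact Finset.mem_insert_self _ _
    · simpa only [hi, if_neg, if_false, ht] using this
  -- absorption of every monomial of G into the G' sum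
  have hmain : ∀ g ∈ Fintype.piFinset t,
      (∏ i, v (g i)) + (∑ g ∈ Fintype.piFinset t', ∏ i, v (g i)) =
        ∑ g ∈ Fintype.piFinset t', ∏ i, v (g i) := by
    intro g hg
    have hMemg : Mem s0 W g := by
      intro i
      have := (Fintype.mem_piFinset.1 hg) i
      rw [ht] at this
      rcases Finset.mem_insert.1 this with h' | h'
      · exact Or.inl h'
      · exact Or.inr h'
    rcases reduce (s0 := s0) (cap := cap) (W := W) hcap1 v hval (F s0 g) g hMemg
        le_rfl with h0 | ⟨g₁, hMemg₁, hRedg₁, hprod₁⟩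
    · rw [h0, zero_add]
    · obtain ⟨g', hMemg', hcntg', hfixg'⟩ := exch h hMemh hRedh hmax n g₁ hMemg₁ hRedg₁
        (le_trans (Finset.card_filter_le _ _) (by simp))
      have hprod' : (∏ i, v (g' i)) = ∏ i, v (g i) := by
        rw [prod_eq_of_cnt_eq v hcntg', hprod₁]
      have hg'mem : g' ∈ Fintype.piFinset t' := by
        rw [Fintype.mem_piFinset]
        intro i
        rw [ht']
        by_cases hi : i ∈ D
        · simp only [hi, if_pos, Finset.mem_singleton]
          exact hfixg' i (hDs0 i hi)
        · simp only [hi, if_neg]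
          rcases hMemg' i with h' | h'
          · rw [h']; exact Finset.mem_insert_self _ _
          · exact Finset.mem_insert_of_mem h'
      rw [← hprod']
      exact absorb_mem hadd (f := fun g => ∏ i, v (g i)) hg'mem
  calc (∑ g ∈ Fintype.piFinset t, ∏ i, v (g i))
      = (∑ g ∈ Fintype.piFinset t', ∏ i, v (g i)) +
          ∑ g ∈ Fintype.piFinset t, ∏ i, v (g i) := (absorb_subset hadd hsub _).symm
    _ = (∑ g ∈ Fintype.piFinset t, ∏ i, v (g i)) +
          ∑ g ∈ Fintype.piFinset t', ∏ i, v (g i) := add_comm _ _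
    _ = ∑ g ∈ Fintype.piFinset t', ∏ i, v (g i) := absorb_forall hadd hmain

end core

section extract

universe v

/-- extract the sublist of `l` given by positions where `K` is true. -/
lemma extract {α : Type*} : ∀ (l : List α) (K : Fin l.length → Bool),
    ∃ l' : List α, l'.Sublist l ∧
      l'.length = (univ.filter (fun i => K i = true)).card ∧
      ∀ (M : Type v) [CommMonoid M] (F : α → M),
        (l'.map F).prod = ∏ i ∈ univ.filter (fun i => K i = true), F (l.get i) := by
  intro l
  induction l with
  | nil =>
    intro K
    refine ⟨[], List.Sublist.refl _, ?_, ?_⟩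
    · simp
    · intro M _ F
      simp
  | cons a tl IH =>
    intro K
    obtain ⟨l'', h1, h2, h3⟩ := IH (fun i => K i.succ)
    have hcard : (univ.filter (fun i => K i = true)).card =
        (if K (0 : Fin (tl.length + 1)) = true then 1 else 0) +
          (univ.filter (fun i : Fin tl.length => K i.succ = true)).card := by
      rw [Finset.card_filter, Finset.card_filter]
      exact Fin.sum_univ_succ (f := fun i : Fin (tl.length + 1) =>
        if K i = true then 1 else 0)
    have hprodsplit : ∀ (M : Type v) [CommMonoid M] (F : α → M),
        (∏ i ∈ univ.filter (fun i => K i = true), F ((a :: tl).get i)) =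
          (if K (0 : Fin (tl.length + 1)) = true then F a else 1) *
            ∏ i ∈ univ.filter (fun i : Fin tl.length => K i.succ = true), F (tl.get i) := by
      intro M _ F
      rw [Finset.prod_filter, Finset.prod_filter]
      exact Fin.prod_univ_succ (f := fun i : Fin (tl.length + 1) =>
        if K i = true then F ((a :: tl).get i) else 1)
    cases hK0 : K (0 : Fin (tl.length + 1)) with
    | false =>
      refine ⟨l'', h1.cons a, ?_, ?_⟩
      · rw [hcard, hK0, h2]; simp
      · intro M iM F
        rw [hprodsplit M F, hK0, h3 M F]
        simp
    | true =>
      refine ⟨a :: l'', h1.cons₂ a, ?_, ?_⟩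
      · rw [hcard, hK0]; simp [h2, add_comm]
      · intro M iM F
        rw [hprodsplit M F, hK0, List.map_cons, List.prod_cons, h3 M F]
        simp

end extract

end S0Cut

open S0Cut in
/-- over bounded variables `B` (axiom `s^{b s} = 0`) and periodic
variables `P` (axiom `s^{p s} = 1`), for an arbitrary periodic variable `s₀`,
every product of linear terms `s₀ + Σ_{s∈W} s` (with
`∅ ≠ W ⊆ (B ∪ P) \ {s₀}`) of length exceeding
`Σ_B (b s − 1) + Σ_P (lcm (p s) (p s₀) − 1)` has a strict subproduct with the
same normal form (i.e. equal value in every model). -/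
theorem s0_anchored_cutoff
    {B P : Type*} [Fintype B] [Fintype P]
    (b : B → ℕ) (p : P → ℕ) (hb : ∀ s, 2 ≤ b s) (hp : ∀ s, 1 ≤ p s)
    (s₀ : P)
    (l : List (Finset (B ⊕ P))) (hne : ∀ W ∈ l, W.Nonempty)
    (hs₀ : ∀ W ∈ l, Sum.inr s₀ ∉ W)
    (hlen : (∑ s : B, (b s - 1)) + ∑ s : P, (Nat.lcm (p s) (p s₀) - 1) < l.length) :
    ∃ l' : List (Finset (B ⊕ P)), l'.Sublist l ∧ l' ≠ l ∧
      ∀ (R : Type) [CommSemiring R], (∀ a : R, a + a = a) →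
        ∀ v : B ⊕ P → R, (∀ s : B, v (Sum.inl s) ^ b s = 0) →
          (∀ s : P, v (Sum.inr s) ^ p s = 1) →
          (l'.map fun W => v (Sum.inr s₀) + ∑ x ∈ W, v x).prod =
            (l.map fun W => v (Sum.inr s₀) + ∑ x ∈ W, v x).prod := by
  classical
  have hW : ∀ i : Fin l.length, Sum.inr s₀ ∉ l.get i :=
    fun i => hs₀ _ (List.get_mem l i)
  set cap : (B ⊕ P) → ℕ := Sum.elim b (fun s => Nat.lcm (p s) (p s₀)) with hcap
  have hcap1 : ∀ y, 1 ≤ cap y := by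
    rintro (s | s)
    · exact le_trans one_le_two (hb s)
    · exact Nat.lcm_pos (hp s) (hp s₀)
  have hcaps0 : cap (Sum.inr s₀) = p s₀ := by
    show Nat.lcm (p s₀) (p s₀) = p s₀
    exact Nat.lcm_self (p s₀)
  have hsum : ∑ y : B ⊕ P, (cap y - 1) =
      (∑ s : B, (b s - 1)) + ∑ s : P, (Nat.lcm (p s) (p s₀) - 1) := by
    rw [Fintype.sum_sum_type]
    rfl
  have hsplit : cap (Sum.inr s₀) - 1 +
      (∑ y ∈ (univ : Finset (B ⊕ P)).erase (Sum.inr s₀), (cap y - 1)) =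
      ∑ y : B ⊕ P, (cap y - 1) :=
    Finset.add_sum_erase _ (fun y => cap y - 1) (Finset.mem_univ _)
  have hnbound : (∑ y ∈ (univ : Finset (B ⊕ P)).erase (Sum.inr s₀), (cap y - 1)) +
      cap (Sum.inr s₀) ≤ l.length := by
    have h1 := hlen
    rw [← hsum] at h1
    have h2 : 1 ≤ cap (Sum.inr s₀) := hcap1 _
    omega
  obtain ⟨D, hDcard, hDprod⟩ :=
    core (Sum.inr s₀) cap hcap1 (fun i => l.get i) hW hnbound
  obtain ⟨l', hsub, hlen', hprod'⟩ := extract l (fun i => decide (i ∉ D))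
  have hfilter : (univ.filter (fun i : Fin l.length => (decide (i ∉ D)) = true)) = Dᶜ := by
    ext i
    simp
  refine ⟨l', hsub, ?_, ?_⟩
  · intro heq
    have hll : l'.length = l.length := by rw [heq]
    rw [hlen', hfilter, Finset.card_compl, Fintype.card_fin] at hll
    have hc : D.card ≤ l.length := by
      have := Finset.card_le_univ D
      simpa using this
    have h9 : 1 ≤ p s₀ := hp s₀
    have h10 : 1 ≤ l.length := by omega
    rw [hDcard, hcaps0] at hll hc
    omega
  · intro R instR hadd v hb0 hp1
    have hval : ∀ y, y ≠ Sum.inr s₀ →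
        v y ^ cap y = 0 ∨ (v y ^ cap y = 1 ∧ v (Sum.inr s₀) ^ cap y = 1) := by
      rintro (s | s) hy
      · exact Or.inl (hb0 s)
      · right
        obtain ⟨k, hk⟩ := Nat.dvd_lcm_left (p s) (p s₀)
        obtain ⟨k', hk'⟩ := Nat.dvd_lcm_right (p s) (p s₀)
        constructor
        · show v (Sum.inr s) ^ Nat.lcm (p s) (p s₀) = 1
          rw [hk, pow_mul, hp1 s, one_pow]
        · show v (Sum.inr s₀) ^ Nat.lcm (p s) (p s₀) = 1
          rw [hk', pow_mul, hp1 s₀, one_pow]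
    have hvs0 : v (Sum.inr s₀) ^ cap (Sum.inr s₀) = 1 := by
      rw [hcaps0]
      exact hp1 s₀
    have heq := hDprod R hadd v hval hvs0
    have hmapl : (l.map fun W => v (Sum.inr s₀) + ∑ x ∈ W, v x).prod =
        ∏ i : Fin l.length, (v (Sum.inr s₀) + ∑ x ∈ l.get i, v x) := by
      conv_lhs => rw [← List.ofFn_get l]
      rw [List.map_ofFn, List.prod_ofFn]
      rfl
    rw [hprod' R (fun W => v (Sum.inr s₀) + ∑ x ∈ W, v x), hfilter, hmapl]
    exact heq.symm
end
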